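/- arXiv:2107.11611 — 3 statements merged into one kernel-verified Lean document; each statement's English description precedes it below -/
import Mathlib

section
/- Assume 0 < τ < τ*. Define W_0 = 0 and, for k = 0,1,…, let W_{k+1} be the minimal nonnegative solution of the quadratic matrix equation W = B̃_{-1}(τ, W_k) + B̃_1(τ) W² in the unknown W. Then each W_{k+1} exists, the sequence satisfies 0 ≤ W_k ≤ W_{k+1}, each W_k is substochastic, and W_k converges monotonically to W_min, the minimal substochastic solution of equation (QW). -/
open MeasureTheory Matrix Filter

noncomputable section

/-- Entrywise Bochner integral over `(0,∞)` of a matrix-valued function. -/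
def intP {n : ℕ} (f : ℝ → Matrix (Fin n) (Fin n) ℝ) : Matrix (Fin n) (Fin n) ℝ :=
  Matrix.of fun i j => ∫ x in Set.Ioi (0:ℝ), f x i j

/-- Matrix exponential. -/
def mexp {n : ℕ} (A : Matrix (Fin n) (Fin n) ℝ) : Matrix (Fin n) (Fin n) ℝ :=
  NormedSpace.exp A

/-- `∫_0^x e^{Gs} ds` (entrywise). -/
def cumExp {n : ℕ} (G : Matrix (Fin n) (Fin n) ℝ) (x : ℝ) : Matrix (Fin n) (Fin n) ℝ :=
  Matrix.of fun i j => ∫ s in (0:ℝ)..x, mexp (s • G) i j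

/-- Irreducibility of a square matrix: for all `i ≠ j` there is a path from `i` to `j`
along nonzero entries. -/
def MatIrr {m : Type*} (A : Matrix m m ℝ) : Prop :=
  ∀ i j : m, i ≠ j → ∃ (r : ℕ) (p : ℕ → m), p 0 = i ∧ p r = j ∧
    ∀ k < r, A (p k) (p (k+1)) ≠ 0

/-- Spectral radius of a real matrix: supremum of the moduli of its complex eigenvalues. -/
def specRad {m : Type*} [Fintype m] [DecidableEq m] (A : Matrix m m ℝ) : ℝ :=
  sSup ((fun z : ℂ => ‖z‖) '' (spectrum ℂ (A.map (algebraMap ℝ ℂ))))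

/-- `A` is an M-matrix: `A = s•I − B` with `B ≥ 0` entrywise and `ρ(B) ≤ s`. -/
def IsMMatrix {m : Type*} [Fintype m] [DecidableEq m] (A : Matrix m m ℝ) : Prop :=
  ∃ (s : ℝ) (B : Matrix m m ℝ), (∀ i j, 0 ≤ B i j) ∧ specRad B ≤ s ∧
    A = s • (1 : Matrix m m ℝ) - B

/-- `A = M − N` is a regular splitting: `M` invertible, `M⁻¹ ≥ 0`, `N ≥ 0`. -/
def RegSplit {n : ℕ} (A M N : Matrix (Fin n) (Fin n) ℝ) : Prop :=
  A = M - N ∧ IsUnit M.det ∧ (∀ i j, 0 ≤ M⁻¹ i j) ∧ (∀ i j, 0 ≤ N i j)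

/-- The complex characteristic roots (eigenvalues with algebraic multiplicity)
of a real matrix. -/
def cRoots {n : ℕ} (Y : Matrix (Fin n) (Fin n) ℝ) : Multiset ℂ :=
  ((Y.map (algebraMap ℝ ℂ)).charpoly).roots

/-- substochastic matrix -/
def Substoch {n : ℕ} (W : Matrix (Fin n) (Fin n) ℝ) : Prop :=
  (∀ i j, 0 ≤ W i j) ∧ ∀ i, ∑ j, W i j ≤ 1

/-- stochastic matrix -/
def StochMat {n : ℕ} (W : Matrix (Fin n) (Fin n) ℝ) : Prop :=
  (∀ i j, 0 ≤ W i j) ∧ ∀ i, ∑ j, W i j = 1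

/-- subgenerator -/
def IsSubGen {n : ℕ} (Y : Matrix (Fin n) (Fin n) ℝ) : Prop :=
  (∀ i j, i ≠ j → 0 ≤ Y i j) ∧ ∀ i, ∑ j, Y i j ≤ 0

/-- generator -/
def IsGen {n : ℕ} (Y : Matrix (Fin n) (Fin n) ℝ) : Prop :=
  (∀ i j, i ≠ j → 0 ≤ Y i j) ∧ ∀ i, ∑ j, Y i j = 0

/-- The data of a Markov-modulated Lévy process: phase generator `Q`, Brownian
drifts `a` and volatilities `s` (denoted `σ` in the paper), Lévy densities `ν`,
phase-change jump densities `μ`, and `U0 = U(0)` (the atoms at 0 of the jump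
distributions). -/
structure Dat (n : ℕ) where
  Q : Matrix (Fin n) (Fin n) ℝ
  a : Fin n → ℝ
  s : Fin n → ℝ
  ν : Fin n → ℝ → ℝ
  μ : Fin n → Fin n → ℝ → ℝ
  U0 : Matrix (Fin n) (Fin n) ℝ

namespace Dat

variable {n : ℕ} (D : Dat n)

/-- The standing assumptions of the paper. -/
structure Good : Prop where
  hn : 1 ≤ n
  hQoff : ∀ i j, i ≠ j → 0 ≤ D.Q i j
  hQrow : ∀ i, ∑ j, D.Q i j = 0
  hQirr : MatIrr D.Q
  hs : ∀ i, 0 < D.s i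
  hνc : ∀ i, ContinuousOn (D.ν i) (Set.Ioi 0)
  hν0 : ∀ i, ∀ x ∈ Set.Ioi (0:ℝ), 0 ≤ D.ν i x
  hνi : ∀ i, IntegrableOn (D.ν i) (Set.Ioi 0)
  hU0d : ∀ i, D.U0 i i = 1
  hU0o : ∀ i j, i ≠ j → D.U0 i j ∈ Set.Icc (0:ℝ) 1
  hμc : ∀ i j, i ≠ j → ContinuousOn (D.μ i j) (Set.Ioi 0)
  hμ0 : ∀ i j, ∀ x ∈ Set.Ioi (0:ℝ), 0 ≤ D.μ i j x
  hμi : ∀ i j, i ≠ j → IntegrableOn (D.μ i j) (Set.Ioi 0)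
  hμU : ∀ i j, i ≠ j → D.U0 i j + ∫ x in Set.Ioi (0:ℝ), D.μ i j x = 1
  hμd : ∀ i x, D.μ i i x = 0

/-- `Δ_a`. -/
def Da : Matrix (Fin n) (Fin n) ℝ := Matrix.diagonal D.a

/-- `Δ_{σ²}`. -/
def Ds : Matrix (Fin n) (Fin n) ℝ := Matrix.diagonal fun i => (D.s i)^2

/-- `Δ_ν(x)`. -/
def Dν (x : ℝ) : Matrix (Fin n) (Fin n) ℝ := Matrix.diagonal fun i => D.ν i x

/-- `Q ∘ μ(x)` (Hadamard product). -/
def Qμ (x : ℝ) : Matrix (Fin n) (Fin n) ℝ := Matrix.of fun i j => D.Q i j * D.μ i j x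

/-- The matrix function `F`. -/
def F (Y : Matrix (Fin n) (Fin n) ℝ) : Matrix (Fin n) (Fin n) ℝ :=
  D.Da * Y + (1/2 : ℝ) • (D.Ds * (Y * Y))
    + intP (fun x => D.Dν x * (mexp (x • Y) - 1))
    + Matrix.hadamard D.Q D.U0
    + intP (fun x => D.Qμ x * mexp (x • Y))

/-- The drift `κ`, relative to the stationary vector `π` of `Q`. -/
def kappa (π : Fin n → ℝ) : ℝ :=
  ∑ i, π i * (D.a i + (∫ x in Set.Ioi (0:ℝ), x * D.ν i x)
    + ∑ j, D.Q i j * ∫ x in Set.Ioi (0:ℝ), x * D.μ i j x)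

/-- `π` is the (positive) stationary probability vector of `Q`. -/
def IsStat (π : Fin n → ℝ) : Prop :=
  (∀ i, 0 < π i) ∧ (∀ j, ∑ i, π i * D.Q i j = 0) ∧ ∑ i, π i = 1

/-- `H(τ, W)`. -/
def H (τ : ℝ) (W : Matrix (Fin n) (Fin n) ℝ) : Matrix (Fin n) (Fin n) ℝ :=
  intP (fun x => D.Dν x * (mexp ((τ⁻¹ * x) • (W - 1)) - 1))

/-- `K(τ, W)`. -/
def K (τ : ℝ) (W : Matrix (Fin n) (Fin n) ℝ) : Matrix (Fin n) (Fin n) ℝ :=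
  Matrix.hadamard D.Q D.U0 + intP (fun x => D.Qμ x * mexp ((τ⁻¹ * x) • (W - 1)))

/-- `B_1`. -/
def B1 : Matrix (Fin n) (Fin n) ℝ := D.Ds

/-- `B_0(τ)`. -/
def B0 (τ : ℝ) : Matrix (Fin n) (Fin n) ℝ := (2*τ) • D.Da - (2:ℝ) • D.Ds

/-- `B_{-1}(τ, W)`. -/
def Bm1 (τ : ℝ) (W : Matrix (Fin n) (Fin n) ℝ) : Matrix (Fin n) (Fin n) ℝ :=
  D.Ds - (2*τ) • D.Da + (2*τ^2) • (D.H τ W + D.K τ W)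

/-- Equation (QW): `B₁W² + B₀(τ)W + B₋₁(τ,W) = 0`. -/
def QW (τ : ℝ) (W : Matrix (Fin n) (Fin n) ℝ) : Prop :=
  D.B1 * (W * W) + D.B0 τ * W + D.Bm1 τ W = 0

/-- `B̃_{-1}(τ, W) = −B₀(τ)⁻¹ B₋₁(τ,W)`. -/
def Btm1 (τ : ℝ) (W : Matrix (Fin n) (Fin n) ℝ) : Matrix (Fin n) (Fin n) ℝ :=
  -(D.B0 τ)⁻¹ * D.Bm1 τ W

/-- `B̃_1(τ) = −B₀(τ)⁻¹ B₁`. -/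
def Bt1 (τ : ℝ) : Matrix (Fin n) (Fin n) ℝ := -(D.B0 τ)⁻¹ * D.B1

/-- `0 < τ < τ*`: `troot i` is the unique positive root `τ_i` of the quadratic
`σ_i² − 2τ a_i + 2τ²(q_ii − ∫_0^∞ ν_i)`, `τ` is positive, `τ < σ_i²/a_i` whenever
`a_i > 0`, and `τ < τ_i` for all `i`. -/
def TauOK (troot : Fin n → ℝ) (τ : ℝ) : Prop :=
  (∀ i, 0 < troot i ∧
      (D.s i)^2 - 2 * troot i * D.a i
        + 2 * (troot i)^2 * (D.Q i i - ∫ x in Set.Ioi (0:ℝ), D.ν i x) = 0 ∧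
      ∀ t > 0, (D.s i)^2 - 2 * t * D.a i
        + 2 * t^2 * (D.Q i i - ∫ x in Set.Ioi (0:ℝ), D.ν i x) = 0 → t = troot i) ∧
  0 < τ ∧ (∀ i, 0 < D.a i → τ < (D.s i)^2 / D.a i) ∧ (∀ i, τ < troot i)

/-- `ρ_i = ∫_0^∞ ν_i`. -/
def rho (i : Fin n) : ℝ := ∫ x in Set.Ioi (0:ℝ), D.ν i x

/-- `λ_i = ρ_i + |q_ii|`. -/
def lam (i : Fin n) : ℝ := D.rho i + |D.Q i i|

/-- `b_i`. -/
def b (i : Fin n) : ℝ := (Real.sqrt ((D.a i)^2 + 2 * D.lam i * (D.s i)^2) + D.a i) / (D.s i)^2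

/-- `c_i`. -/
def c (i : Fin n) : ℝ := D.b i - 2 * D.a i / (D.s i)^2

/-- `Ĉ(X)`. -/
def Chat (X : Matrix (Fin n) (Fin n) ℝ) : Matrix (Fin n) (Fin n) ℝ :=
  Matrix.hadamard (D.Q - Matrix.diagonal fun i => D.Q i i) D.U0
    + intP (fun x => D.Dν x * mexp (x • (X - Matrix.diagonal D.b)))
    + intP (fun x => D.Qμ x * mexp (x • (X - Matrix.diagonal D.b)))

/-- `NARE(W)`: the Riccati equation `S² − Δ_c S − S Δ_b + 2Δ_{σ²}⁻¹ Ĉ(W) = 0` in `S`. -/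
def NARE (W S : Matrix (Fin n) (Fin n) ℝ) : Prop :=
  S * S - Matrix.diagonal D.c * S - S * Matrix.diagonal D.b
    + (2:ℝ) • (Matrix.diagonal (fun i => ((D.s i)^2)⁻¹) * D.Chat W) = 0

/-- `S` is the minimal nonnegative solution of `NARE(W)`. -/
def MinSolNARE (W S : Matrix (Fin n) (Fin n) ℝ) : Prop :=
  (∀ i j, 0 ≤ S i j) ∧ D.NARE W S ∧
    ∀ T, (∀ i j, 0 ≤ T i j) → D.NARE W T → ∀ i j, S i j ≤ T i j

/-- `Λ` (relative to `G`). -/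
def Lam (G : Matrix (Fin n) (Fin n) ℝ) : Matrix (Fin n) (Fin n) ℝ :=
  intP (fun x => D.Dν x * cumExp G x) + intP (fun x => D.Qμ x * cumExp G x)

/-- `Θ = −2Δ_a − Δ_{σ²}G − 2Λ` (relative to `G`). -/
def Theta (G : Matrix (Fin n) (Fin n) ℝ) : Matrix (Fin n) (Fin n) ℝ :=
  (-2 : ℝ) • D.Da - D.Ds * G - (2:ℝ) • D.Lam G

/-- Integrability of the first moments `∫ x ν_i(x) dx`, `∫ x μ_ij(x) dx`. -/
def Moments : Prop :=
  (∀ i, IntegrableOn (fun x => x * D.ν i x) (Set.Ioi (0:ℝ))) ∧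
  (∀ i j, IntegrableOn (fun x => x * D.μ i j x) (Set.Ioi (0:ℝ)))

end Dat

namespace StmtAux

abbrev Mnn (n : ℕ) := Matrix (Fin n) (Fin n) ℝ

variable {n : ℕ}

/-! ### Matrix exponential, entrywise -/

lemma mexp_add_of_commute {A B : Mnn n} (h : Commute A B) :
    mexp (A + B) = mexp A * mexp B := Matrix.exp_add_of_commute A B h

lemma mexp_diagonal (v : Fin n → ℝ) :
    mexp (Matrix.diagonal v) = Matrix.diagonal (fun i => Real.exp (v i)) := by
  rw [mexp, Matrix.exp_diagonal]
  rw [Pi.exp_def]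
  funext i
  rw [Real.exp_eq_exp_ℝ]

section NormInst

attribute [local instance] Matrix.linftyOpNormedAddCommGroup Matrix.linftyOpNormedRing
  Matrix.linftyOpNormedAlgebra

lemma summable_exp_series (A : Mnn n) :
    Summable (fun k : ℕ => ((Nat.factorial k : ℝ))⁻¹ • A ^ k) :=
  NormedSpace.expSeries_summable' A

lemma summable_exp_entry (A : Mnn n) (i j : Fin n) :
    Summable (fun k : ℕ => ((Nat.factorial k : ℝ))⁻¹ * (A ^ k) i j) := by
  have h := summable_exp_series A
  have h1 := Pi.summable.mp h i
  have h2 := Pi.summable.mp h1 j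
  simpa using h2

lemma mexp_apply (A : Mnn n) (i j : Fin n) :
    mexp A i j = ∑' k : ℕ, ((Nat.factorial k : ℝ))⁻¹ * (A ^ k) i j := by
  have h := summable_exp_series A
  have hA : NormedSpace.exp A = ∑' k : ℕ, ((Nat.factorial k : ℝ))⁻¹ • A ^ k := by
    rw [NormedSpace.exp_eq_tsum ℝ]
  rw [mexp, hA]
  erw [tsum_apply h, tsum_apply (Pi.summable.mp h i)]
  rfl

lemma mexp_continuous : Continuous (mexp : Mnn n → Mnn n) :=
  NormedSpace.exp_continuous

end NormInst

lemma real_exp_tsum (c : ℝ) :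
    Real.exp c = ∑' k : ℕ, ((Nat.factorial k : ℝ))⁻¹ * c ^ k := by
  rw [Real.exp_eq_exp_ℝ, NormedSpace.exp_eq_tsum ℝ]
  simp [smul_eq_mul]

lemma summable_real_exp_series (c : ℝ) :
    Summable (fun k : ℕ => ((Nat.factorial k : ℝ))⁻¹ * c ^ k) := by
  simpa [smul_eq_mul] using (NormedSpace.expSeries_summable' (𝕂 := ℝ) c)

lemma pow_entry_nonneg {A : Mnn n} (hA : ∀ i j, 0 ≤ A i j) (k : ℕ) (i j : Fin n) :
    0 ≤ (A ^ k) i j := by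
  induction k generalizing i j with
  | zero => simp only [pow_zero, Matrix.one_apply]; split <;> norm_num
  | succ m ih =>
    rw [pow_succ, Matrix.mul_apply]
    exact Finset.sum_nonneg fun l _ => mul_nonneg (ih i l) (hA l j)

lemma pow_entry_mono {A B : Mnn n} (hA : ∀ i j, 0 ≤ A i j) (hAB : ∀ i j, A i j ≤ B i j)
    (k : ℕ) (i j : Fin n) : (A ^ k) i j ≤ (B ^ k) i j := by
  induction k generalizing i j with
  | zero => simp
  | succ m ih =>
    rw [pow_succ, pow_succ, Matrix.mul_apply, Matrix.mul_apply]
    refine Finset.sum_le_sum fun l _ => ?_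
    exact mul_le_mul (ih i l) (hAB l j) (hA l j) (le_trans (pow_entry_nonneg hA m i l) (ih i l))

lemma mexp_entry_nonneg {A : Mnn n} (hA : ∀ i j, 0 ≤ A i j) (i j : Fin n) :
    0 ≤ mexp A i j := by
  rw [mexp_apply]
  exact tsum_nonneg fun k => mul_nonneg (by positivity) (pow_entry_nonneg hA k i j)

lemma mexp_entry_mono {A B : Mnn n} (hA : ∀ i j, 0 ≤ A i j) (hAB : ∀ i j, A i j ≤ B i j)
    (i j : Fin n) : mexp A i j ≤ mexp B i j := by
  rw [mexp_apply, mexp_apply]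
  refine Summable.tsum_le_tsum (fun k => ?_) (summable_exp_entry A i j) (summable_exp_entry B i j)
  exact mul_le_mul_of_nonneg_left (pow_entry_mono hA hAB k i j) (by positivity)

lemma pow_rowsum_le {A : Mnn n} {c : ℝ} (hA : ∀ i j, 0 ≤ A i j) (hc : 0 ≤ c)
    (h : ∀ i, ∑ j, A i j ≤ c) (k : ℕ) (i : Fin n) : ∑ j, (A ^ k) i j ≤ c ^ k := by
  induction k generalizing i with
  | zero => simp [Matrix.one_apply]
  | succ m ih =>
    rw [pow_succ']
    calc ∑ j, (A * A ^ m) i j = ∑ j, ∑ l, A i l * (A ^ m) l j := by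
          simp [Matrix.mul_apply]
      _ = ∑ l, A i l * ∑ j, (A ^ m) l j := by
          rw [Finset.sum_comm]; simp [Finset.mul_sum]
      _ ≤ ∑ l, A i l * c ^ m := by
          refine Finset.sum_le_sum fun l _ => ?_
          exact mul_le_mul_of_nonneg_left (ih l) (hA i l)
      _ = (∑ l, A i l) * c ^ m := by rw [Finset.sum_mul]
      _ ≤ c * c ^ m := mul_le_mul_of_nonneg_right (h i) (by positivity)
      _ = c ^ (m + 1) := by ring

lemma mexp_rowsum_le {A : Mnn n} {c : ℝ} (hA : ∀ i j, 0 ≤ A i j) (hc : 0 ≤ c)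
    (h : ∀ i, ∑ j, A i j ≤ c) (i : Fin n) : ∑ j, mexp A i j ≤ Real.exp c := by
  have hsum : ∀ j : Fin n, Summable fun k : ℕ => ((Nat.factorial k : ℝ))⁻¹ * (A ^ k) i j :=
    fun j => summable_exp_entry A i j
  calc ∑ j, mexp A i j = ∑ j, ∑' k : ℕ, ((Nat.factorial k : ℝ))⁻¹ * (A ^ k) i j := by
        simp_rw [mexp_apply]
    _ = ∑' k : ℕ, ∑ j, ((Nat.factorial k : ℝ))⁻¹ * (A ^ k) i j := by
        rw [Summable.tsum_finsetSum fun j _ => hsum j]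
    _ ≤ ∑' k : ℕ, ((Nat.factorial k : ℝ))⁻¹ * c ^ k := by
        refine Summable.tsum_le_tsum (fun k => ?_) (summable_sum fun j _ => hsum j)
          (summable_real_exp_series c)
        rw [← Finset.mul_sum]
        exact mul_le_mul_of_nonneg_left (pow_rowsum_le hA hc h k i) (by positivity)
    _ = Real.exp c := (real_exp_tsum c).symm

lemma smul_one_eq_diagonal (c : ℝ) :
    c • (1 : Mnn n) = Matrix.diagonal (fun _ => c) := by
  ext i j
  by_cases h : i = j <;>
    simp [Matrix.smul_apply, Matrix.one_apply, Matrix.diagonal_apply, h]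

lemma mexp_smul_one (t : ℝ) : mexp (t • (1 : Mnn n)) = Real.exp t • (1 : Mnn n) := by
  rw [smul_one_eq_diagonal t, mexp_diagonal, smul_one_eq_diagonal (Real.exp t)]

lemma mexp_smul_sub_one (t : ℝ) (W : Mnn n) :
    mexp (t • (W - 1)) = Real.exp (-t) • mexp (t • W) := by
  have hc : Commute (t • W) ((-t) • (1 : Mnn n)) :=
    ((Commute.one_right W).smul_left t).smul_right (-t)
  have h2 : t • (W - 1) = t • W + (-t) • (1 : Mnn n) := by
    rw [smul_sub]; module
  rw [h2, mexp_add_of_commute hc, mexp_smul_one]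
  rw [mul_smul_comm, mul_one]


/-! ### The exponential kernel `Ef` -/

/-- `e^{τ⁻¹ x (W − I)}`. -/
def Ef (τ : ℝ) (W : Mnn n) (x : ℝ) : Mnn n := mexp ((τ⁻¹ * x) • (W - 1))

lemma Ef_eq (τ : ℝ) (W : Mnn n) (x : ℝ) :
    Ef τ W x = Real.exp (-(τ⁻¹ * x)) • mexp ((τ⁻¹ * x) • W) :=
  mexp_smul_sub_one _ _

variable {τ : ℝ} (hτ0 : 0 < τ)

section EfFacts

variable {W : Mnn n} (hW : Substoch W) {x : ℝ} (hx : 0 < x)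

include hτ0 hx

lemma Ef_nonneg (hWn : ∀ i j, 0 ≤ W i j) (i j : Fin n) : 0 ≤ Ef τ W x i j := by
  have ht : 0 ≤ τ⁻¹ * x := by positivity
  rw [Ef_eq, Matrix.smul_apply]
  refine mul_nonneg (Real.exp_nonneg _) (mexp_entry_nonneg (fun i j => ?_) i j)
  rw [Matrix.smul_apply]
  exact mul_nonneg ht (hWn i j)

include hW

lemma Ef_rowsum_le (i : Fin n) : ∑ j, Ef τ W x i j ≤ 1 := by
  have ht : 0 ≤ τ⁻¹ * x := by positivity
  have hWn := hW.1
  have h1 : ∑ j, mexp ((τ⁻¹ * x) • W) i j ≤ Real.exp (τ⁻¹ * x) := by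
    refine mexp_rowsum_le (fun i j => ?_) ht (fun i => ?_) i
    · rw [Matrix.smul_apply]; exact mul_nonneg ht (hWn i j)
    · calc ∑ j, ((τ⁻¹ * x) • W) i j = (τ⁻¹ * x) * ∑ j, W i j := by
            simp [Matrix.smul_apply, Finset.mul_sum]
        _ ≤ (τ⁻¹ * x) * 1 := mul_le_mul_of_nonneg_left (hW.2 i) ht
        _ = τ⁻¹ * x := mul_one _
  calc ∑ j, Ef τ W x i j
      = Real.exp (-(τ⁻¹ * x)) * ∑ j, mexp ((τ⁻¹ * x) • W) i j := by
        rw [Ef_eq]; simp [Matrix.smul_apply, Finset.mul_sum]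
    _ ≤ Real.exp (-(τ⁻¹ * x)) * Real.exp (τ⁻¹ * x) :=
        mul_le_mul_of_nonneg_left h1 (Real.exp_nonneg _)
    _ = 1 := by rw [← Real.exp_add]; simp

lemma Ef_entry_le_one (i j : Fin n) : Ef τ W x i j ≤ 1 := by
  have h1 : Ef τ W x i j ≤ ∑ l, Ef τ W x i l :=
    Finset.single_le_sum (fun l _ => Ef_nonneg hτ0 hx hW.1 i l) (Finset.mem_univ j)
  exact h1.trans (Ef_rowsum_le hτ0 hW hx i)

lemma Ef_abs_le_one (i j : Fin n) : |Ef τ W x i j| ≤ 1 := by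
  rw [abs_le]
  exact ⟨by linarith [Ef_nonneg hτ0 hx hW.1 i j], Ef_entry_le_one hτ0 hW hx i j⟩

end EfFacts

include hτ0 in
lemma Ef_mono {W W' : Mnn n} (hWn : ∀ i j, 0 ≤ W i j) (hle : ∀ i j, W i j ≤ W' i j)
    {x : ℝ} (hx : 0 < x) (i j : Fin n) : Ef τ W x i j ≤ Ef τ W' x i j := by
  have ht : 0 ≤ τ⁻¹ * x := by positivity
  rw [Ef_eq, Ef_eq, Matrix.smul_apply, Matrix.smul_apply]
  refine mul_le_mul_of_nonneg_left (mexp_entry_mono (fun i j => ?_) (fun i j => ?_) i j)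
    (Real.exp_nonneg _)
  · rw [Matrix.smul_apply]; exact mul_nonneg ht (hWn i j)
  · rw [Matrix.smul_apply, Matrix.smul_apply]
    exact mul_le_mul_of_nonneg_left (hle i j) ht

lemma Ef_continuous (W : Mnn n) : Continuous fun x : ℝ => Ef τ W x := by
  unfold Ef
  apply mexp_continuous.comp
  exact (continuous_const.mul continuous_id).smul continuous_const

lemma Ef_entry_continuous (W : Mnn n) (i j : Fin n) :
    Continuous fun x : ℝ => Ef τ W x i j :=
  by exact (Ef_continuous W).matrix_elem i j

lemma Ef_tendsto {g : ℕ → Mnn n} {L : Mnn n} (h : Tendsto g atTop (nhds L)) (x : ℝ)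
    (i j : Fin n) :
    Tendsto (fun k => Ef τ (g k) x i j) atTop (nhds (Ef τ L x i j)) := by
  have h1 : Tendsto (fun k => Ef τ (g k) x) atTop (nhds (Ef τ L x)) := by
    unfold Ef
    exact ((mexp_continuous.tendsto _).comp
      (tendsto_const_nhds.smul (h.sub tendsto_const_nhds)))
  exact ((continuous_apply j).tendsto _).comp (((continuous_apply i).tendsto _).comp h1)


/-! ### Entrywise order facts -/

lemma mul_entry_nonneg {A B : Mnn n} (hA : ∀ i j, 0 ≤ A i j) (hB : ∀ i j, 0 ≤ B i j)
    (i j : Fin n) : 0 ≤ (A * B) i j := by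
  rw [Matrix.mul_apply]
  exact Finset.sum_nonneg fun l _ => mul_nonneg (hA i l) (hB l j)

lemma mul_entry_mono {A A' B B' : Mnn n} (hA : ∀ i j, 0 ≤ A i j) (hB : ∀ i j, 0 ≤ B i j)
    (hAA : ∀ i j, A i j ≤ A' i j) (hBB : ∀ i j, B i j ≤ B' i j) (i j : Fin n) :
    (A * B) i j ≤ (A' * B') i j := by
  rw [Matrix.mul_apply, Matrix.mul_apply]
  refine Finset.sum_le_sum fun l _ => ?_
  exact mul_le_mul (hAA i l) (hBB l j) (hB l j) (le_trans (hA i l) (hAA i l))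

/-! ### The inner fixed-point iteration -/

/-- Iterates of `V ↦ C + T (V * V)` starting from `0`. -/
def iterSeq (T C : Mnn n) : ℕ → Mnn n
  | 0 => 0
  | m + 1 => C + T * (iterSeq T C m * iterSeq T C m)

/-- The entrywise supremum of the iterates. -/
def iterLim (T C : Mnn n) : Mnn n := Matrix.of fun i j => ⨆ m, iterSeq T C m i j

section Iter

variable {T C C' M V : Mnn n}

lemma iterSeq_nonneg (hT : ∀ i j, 0 ≤ T i j) (hC : ∀ i j, 0 ≤ C i j) :
    ∀ m i j, 0 ≤ iterSeq T C m i j := by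
  intro m
  induction m with
  | zero => intro i j; simp [iterSeq]
  | succ m ih =>
    intro i j
    simp only [iterSeq, Matrix.add_apply]
    exact add_nonneg (hC i j) (mul_entry_nonneg hT (fun i j => mul_entry_nonneg ih ih i j) i j)

lemma iterSeq_le (hT : ∀ i j, 0 ≤ T i j) (hC : ∀ i j, 0 ≤ C i j) (hM : ∀ i j, 0 ≤ M i j)
    (hsup : ∀ i j, (C + T * (M * M)) i j ≤ M i j) :
    ∀ m i j, iterSeq T C m i j ≤ M i j := by
  intro m
  induction m with
  | zero => intro i j; simp [iterSeq]; exact hM i j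
  | succ m ih =>
    intro i j
    refine le_trans ?_ (hsup i j)
    simp only [iterSeq, Matrix.add_apply]
    refine add_le_add le_rfl ?_
    exact mul_entry_mono hT (fun i j => mul_entry_nonneg (iterSeq_nonneg hT hC m)
      (iterSeq_nonneg hT hC m) i j) (fun _ _ => le_rfl)
      (fun i j => mul_entry_mono (iterSeq_nonneg hT hC m) (iterSeq_nonneg hT hC m) ih ih i j) i j

lemma iterSeq_succ_mono (hT : ∀ i j, 0 ≤ T i j) (hC : ∀ i j, 0 ≤ C i j) :
    ∀ m i j, iterSeq T C m i j ≤ iterSeq T C (m + 1) i j := by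
  intro m
  induction m with
  | zero => intro i j; simpa [iterSeq] using iterSeq_nonneg hT hC 1 i j
  | succ m ih =>
    intro i j
    simp only [iterSeq, Matrix.add_apply]
    refine add_le_add le_rfl ?_
    exact mul_entry_mono hT (fun i j => mul_entry_nonneg (iterSeq_nonneg hT hC m)
      (iterSeq_nonneg hT hC m) i j) (fun _ _ => le_rfl)
      (fun i j => mul_entry_mono (iterSeq_nonneg hT hC m) (iterSeq_nonneg hT hC m) ih ih i j) i j

lemma iterSeq_le_sol (hT : ∀ i j, 0 ≤ T i j) (hC : ∀ i j, 0 ≤ C i j)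
    (hV : ∀ i j, 0 ≤ V i j) (hfix : V = C + T * (V * V)) :
    ∀ m i j, iterSeq T C m i j ≤ V i j := by
  intro m
  induction m with
  | zero => intro i j; simp [iterSeq]; exact hV i j
  | succ m ih =>
    intro i j
    conv_rhs => rw [hfix]
    simp only [iterSeq, Matrix.add_apply]
    refine add_le_add le_rfl ?_
    exact mul_entry_mono hT (fun i j => mul_entry_nonneg (iterSeq_nonneg hT hC m)
      (iterSeq_nonneg hT hC m) i j) (fun _ _ => le_rfl)
      (fun i j => mul_entry_mono (iterSeq_nonneg hT hC m) (iterSeq_nonneg hT hC m) ih ih i j) i j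

lemma iterSeq_mono_C (hT : ∀ i j, 0 ≤ T i j) (hC : ∀ i j, 0 ≤ C i j)
    (hCC : ∀ i j, C i j ≤ C' i j) :
    ∀ m i j, iterSeq T C m i j ≤ iterSeq T C' m i j := by
  intro m
  induction m with
  | zero => intro i j; simp [iterSeq]
  | succ m ih =>
    intro i j
    simp only [iterSeq, Matrix.add_apply]
    refine add_le_add (hCC i j) ?_
    exact mul_entry_mono hT (fun i j => mul_entry_nonneg (iterSeq_nonneg hT hC m)
      (iterSeq_nonneg hT hC m) i j) (fun _ _ => le_rfl)
      (fun i j => mul_entry_mono (iterSeq_nonneg hT hC m) (iterSeq_nonneg hT hC m) ih ih i j) i j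

variable (hT : ∀ i j, 0 ≤ T i j) (hC : ∀ i j, 0 ≤ C i j) (hM : ∀ i j, 0 ≤ M i j)
  (hsup : ∀ i j, (C + T * (M * M)) i j ≤ M i j)

include hT hC hM hsup

lemma iterSeq_bdd (i j : Fin n) : BddAbove (Set.range fun m => iterSeq T C m i j) := by
  refine ⟨M i j, ?_⟩
  rintro y ⟨m, rfl⟩
  exact iterSeq_le hT hC hM hsup m i j

lemma iterSeq_tendsto : Tendsto (iterSeq T C) atTop (nhds (iterLim T C)) := by
  apply tendsto_pi_nhds.mpr
  intro i
  rw [tendsto_pi_nhds]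
  intro j
  have : iterLim T C i j = ⨆ m, iterSeq T C m i j := rfl
  rw [this]
  exact tendsto_atTop_ciSup (monotone_nat_of_le_succ fun m => iterSeq_succ_mono hT hC m i j)
    (iterSeq_bdd hT hC hM hsup i j)

lemma iterLim_le (i j : Fin n) : iterLim T C i j ≤ M i j :=
  ciSup_le fun m => iterSeq_le hT hC hM hsup m i j

lemma iterLim_nonneg (i j : Fin n) : 0 ≤ iterLim T C i j :=
  le_trans (iterSeq_nonneg hT hC 0 i j) (le_ciSup (iterSeq_bdd hT hC hM hsup i j) 0)

lemma iterLim_fix : iterLim T C = C + T * (iterLim T C * iterLim T C) := by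
  have h1 := iterSeq_tendsto hT hC hM hsup
  have h2 : Tendsto (fun m => iterSeq T C (m + 1)) atTop (nhds (iterLim T C)) :=
    h1.comp (tendsto_add_atTop_nat 1)
  have hcont : Continuous fun p : Mnn n => C + T * (p * p) := by
    exact continuous_const.add (Continuous.matrix_mul continuous_const
      (Continuous.matrix_mul continuous_id continuous_id))
  have h3 : Tendsto (fun m => iterSeq T C (m + 1)) atTop
      (nhds (C + T * (iterLim T C * iterLim T C))) := by
    have : (fun m => iterSeq T C (m + 1))
        = fun m => C + T * (iterSeq T C m * iterSeq T C m) := rfl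
    rw [this]
    exact (hcont.tendsto _).comp h1
  exact tendsto_nhds_unique h2 h3

omit hM hsup in
lemma iterLim_min (hV : ∀ i j, 0 ≤ V i j) (hfix : V = C + T * (V * V)) (i j : Fin n) :
    iterLim T C i j ≤ V i j :=
  ciSup_le fun m => iterSeq_le_sol hT hC hV hfix m i j

omit hM hsup in
lemma iterLim_mono_C {M' : Mnn n} (hC' : ∀ i j, 0 ≤ C' i j) (hCC : ∀ i j, C i j ≤ C' i j)
    (hM' : ∀ i j, 0 ≤ M' i j) (hsup' : ∀ i j, (C' + T * (M' * M')) i j ≤ M' i j)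
    (i j : Fin n) : iterLim T C i j ≤ iterLim T C' i j := by
  refine ciSup_mono (iterSeq_bdd hT hC' hM' hsup' i j) fun m => ?_
  exact iterSeq_mono_C hT hC hCC m i j

end Iter


/-! ### Entry formulas and integral estimates for `H`, `K`, `Bm1` -/

section Dspec

variable {D : Dat n} (hD : D.Good)

lemma H_apply (W : Mnn n) (i j : Fin n) :
    D.H τ W i j = ∫ x in Set.Ioi (0:ℝ), D.ν i x * ((Ef τ W x - 1) i j) := by
  simp only [Dat.H, intP, Matrix.of_apply, Dat.Dν, Matrix.diagonal_mul, Ef]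

lemma K_apply (W : Mnn n) (i j : Fin n) :
    D.K τ W i j = D.Q i j * D.U0 i j
      + ∫ x in Set.Ioi (0:ℝ), ∑ l, D.Q i l * D.μ i l x * Ef τ W x l j := by
  simp only [Dat.K, intP, Matrix.add_apply, Matrix.of_apply, Matrix.hadamard_apply,
    Dat.Qμ, Matrix.mul_apply, Ef]

include hτ0 hD

lemma nu_bound {W : Mnn n} (hW : Substoch W) (i j : Fin n) {x : ℝ} (hx : x ∈ Set.Ioi (0:ℝ)) :
    ‖D.ν i x * ((Ef τ W x - 1) i j)‖ ≤ D.ν i x := by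
  have hx0 : (0:ℝ) < x := hx
  have h1 : |(Ef τ W x - 1 : Mnn n) i j| ≤ 1 := by
    rw [Matrix.sub_apply, Matrix.one_apply]
    by_cases h : i = j
    · simp only [h, if_true]
      rw [abs_le]
      constructor
      · linarith [Ef_nonneg hτ0 hx0 hW.1 j j]
      · linarith [Ef_entry_le_one hτ0 hW hx0 j j]
    · simp only [h, if_false, sub_zero]
      exact Ef_abs_le_one hτ0 hW hx0 i j
  rw [Real.norm_eq_abs, abs_mul, abs_of_nonneg (hD.hν0 i x hx)]
  calc D.ν i x * |(Ef τ W x - 1 : Mnn n) i j| ≤ D.ν i x * 1 :=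
        mul_le_mul_of_nonneg_left h1 (hD.hν0 i x hx)
    _ = D.ν i x := mul_one _

omit hτ0 in
lemma nu_integrand_aesm (W : Mnn n) (i j : Fin n) :
    AEStronglyMeasurable (fun x => D.ν i x * ((Ef τ W x - 1) i j))
      (volume.restrict (Set.Ioi (0:ℝ))) := by
  refine AEStronglyMeasurable.mul
    ((hD.hνc i).aestronglyMeasurable measurableSet_Ioi) ?_
  have : Continuous fun x => (Ef τ W x - 1 : Mnn n) i j := by
    simp only [Matrix.sub_apply]
    exact (Ef_entry_continuous W i j).sub continuous_const
  exact this.aestronglyMeasurable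

lemma integrableOn_nu {W : Mnn n} (hW : Substoch W) (i j : Fin n) :
    IntegrableOn (fun x => D.ν i x * ((Ef τ W x - 1) i j)) (Set.Ioi (0:ℝ)) := by
  refine Integrable.mono' (hD.hνi i) (nu_integrand_aesm hD W i j) ?_
  rw [ae_restrict_iff' measurableSet_Ioi]
  exact Filter.Eventually.of_forall fun x hx => nu_bound hτ0 hD hW i j hx

lemma mu_term_bound {W : Mnn n} (hW : Substoch W) (i j l : Fin n) {x : ℝ}
    (hx : x ∈ Set.Ioi (0:ℝ)) :
    ‖D.Q i l * D.μ i l x * Ef τ W x l j‖ ≤ |D.Q i l| * D.μ i l x := by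
  have hx0 : (0:ℝ) < x := hx
  rw [Real.norm_eq_abs, abs_mul, abs_mul, abs_of_nonneg (hD.hμ0 i l x hx)]
  calc |D.Q i l| * D.μ i l x * |Ef τ W x l j| ≤ |D.Q i l| * D.μ i l x * 1 :=
        mul_le_mul_of_nonneg_left (Ef_abs_le_one hτ0 hW hx0 l j)
          (mul_nonneg (abs_nonneg _) (hD.hμ0 i l x hx))
    _ = |D.Q i l| * D.μ i l x := mul_one _

lemma mu_bound {W : Mnn n} (hW : Substoch W) (i j : Fin n) {x : ℝ}
    (hx : x ∈ Set.Ioi (0:ℝ)) :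
    ‖∑ l, D.Q i l * D.μ i l x * Ef τ W x l j‖ ≤ ∑ l, |D.Q i l| * D.μ i l x :=
  (norm_sum_le _ _).trans (Finset.sum_le_sum fun l _ => mu_term_bound hτ0 hD hW i j l hx)

omit hτ0 in
lemma mu_abs_integrable (i : Fin n) :
    IntegrableOn (fun x => ∑ l, |D.Q i l| * D.μ i l x) (Set.Ioi (0:ℝ)) := by
  refine integrable_finset_sum _ fun l _ => ?_
  by_cases hl : l = i
  · subst hl
    have : (fun x => |D.Q l l| * D.μ l l x) = fun _ => 0 := by
      funext x; rw [hD.hμd]; ring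
    rw [this]
    exact integrable_zero _ _ _
  · exact (hD.hμi i l (Ne.symm hl)).const_mul _

omit hτ0 in
lemma mu_integrand_aesm (W : Mnn n) (i j : Fin n) :
    AEStronglyMeasurable (fun x => ∑ l, D.Q i l * D.μ i l x * Ef τ W x l j)
      (volume.restrict (Set.Ioi (0:ℝ))) := by
  refine Finset.aestronglyMeasurable_fun_sum _ fun l _ => ?_
  by_cases hl : l = i
  · subst hl
    have : (fun x => D.Q l l * D.μ l l x * Ef τ W x l j) = fun _ => 0 := by
      funext x; rw [hD.hμd]; ring
    rw [this]
    exact aestronglyMeasurable_const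
  · refine AEStronglyMeasurable.mul ?_ (Ef_entry_continuous W l j).aestronglyMeasurable
    exact ((hD.hμc i l (Ne.symm hl)).aestronglyMeasurable measurableSet_Ioi).const_mul _

lemma integrableOn_mu {W : Mnn n} (hW : Substoch W) (i j : Fin n) :
    IntegrableOn (fun x => ∑ l, D.Q i l * D.μ i l x * Ef τ W x l j) (Set.Ioi (0:ℝ)) := by
  refine Integrable.mono' (mu_abs_integrable hD i) (mu_integrand_aesm hD W i j) ?_
  rw [ae_restrict_iff' measurableSet_Ioi]
  exact Filter.Eventually.of_forall fun x hx => mu_bound hτ0 hD hW i j hx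

/-! ### Monotonicity and bounds for `H` and `K` -/

lemma H_mono {W W' : Mnn n} (hW : Substoch W) (hW' : Substoch W')
    (hle : ∀ i j, W i j ≤ W' i j) (i j : Fin n) : D.H τ W i j ≤ D.H τ W' i j := by
  rw [H_apply, H_apply]
  refine setIntegral_mono_on (integrableOn_nu hτ0 hD hW i j)
    (integrableOn_nu hτ0 hD hW' i j) measurableSet_Ioi fun x hx => ?_
  have hx0 : (0:ℝ) < x := hx
  refine mul_le_mul_of_nonneg_left ?_ (hD.hν0 i x hx)
  rw [Matrix.sub_apply, Matrix.sub_apply]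
  exact sub_le_sub_right (Ef_mono hτ0 hW.1 hle hx0 i j) _

lemma K_mono {W W' : Mnn n} (hW : Substoch W) (hW' : Substoch W')
    (hle : ∀ i j, W i j ≤ W' i j) (i j : Fin n) : D.K τ W i j ≤ D.K τ W' i j := by
  rw [K_apply, K_apply]
  refine add_le_add le_rfl ?_
  refine setIntegral_mono_on (integrableOn_mu hτ0 hD hW i j)
    (integrableOn_mu hτ0 hD hW' i j) measurableSet_Ioi fun x hx => ?_
  have hx0 : (0:ℝ) < x := hx
  refine Finset.sum_le_sum fun l _ => ?_
  by_cases hl : l = i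
  · subst hl; rw [hD.hμd]; ring_nf; exact le_rfl
  · refine mul_le_mul_of_nonneg_left (Ef_mono hτ0 hW.1 hle hx0 l j) ?_
    exact mul_nonneg (hD.hQoff i l (Ne.symm hl)) (hD.hμ0 i l x hx)

lemma H_offdiag_nonneg {W : Mnn n} (hW : Substoch W) {i j : Fin n} (hij : i ≠ j) :
    0 ≤ D.H τ W i j := by
  rw [H_apply]
  refine setIntegral_nonneg measurableSet_Ioi fun x hx => ?_
  refine mul_nonneg (hD.hν0 i x hx) ?_
  rw [Matrix.sub_apply, Matrix.one_apply_ne hij, sub_zero]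
  exact Ef_nonneg hτ0 hx hW.1 i j

lemma H_diag_ge {W : Mnn n} (hW : Substoch W) (i : Fin n) :
    -(∫ x in Set.Ioi (0:ℝ), D.ν i x) ≤ D.H τ W i i := by
  rw [H_apply, ← integral_neg]
  refine setIntegral_mono_on ((hD.hνi i).neg) (integrableOn_nu hτ0 hD hW i i)
    measurableSet_Ioi fun x hx => ?_
  have h1 : -1 ≤ (Ef τ W x - 1 : Mnn n) i i := by
    rw [Matrix.sub_apply, Matrix.one_apply_eq]
    linarith [Ef_nonneg hτ0 (show (0:ℝ) < x from hx) hW.1 i i]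
  calc -D.ν i x = D.ν i x * (-1) := by ring
    _ ≤ D.ν i x * ((Ef τ W x - 1) i i) := mul_le_mul_of_nonneg_left h1 (hD.hν0 i x hx)

lemma K_offdiag_nonneg {W : Mnn n} (hW : Substoch W) {i j : Fin n} (hij : i ≠ j) :
    0 ≤ D.K τ W i j := by
  rw [K_apply]
  refine add_nonneg (mul_nonneg (hD.hQoff i j hij) (hD.hU0o i j hij).1) ?_
  refine setIntegral_nonneg measurableSet_Ioi fun x hx => ?_
  refine Finset.sum_nonneg fun l _ => ?_
  by_cases hl : l = i
  · subst hl; rw [hD.hμd]; simp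
  · exact mul_nonneg (mul_nonneg (hD.hQoff i l (Ne.symm hl)) (hD.hμ0 i l x hx))
      (Ef_nonneg hτ0 (show (0:ℝ) < x from hx) hW.1 l j)

lemma K_diag_ge {W : Mnn n} (hW : Substoch W) (i : Fin n) : D.Q i i ≤ D.K τ W i i := by
  rw [K_apply, hD.hU0d i, mul_one]
  refine le_add_of_nonneg_right ?_
  refine setIntegral_nonneg measurableSet_Ioi fun x hx => ?_
  refine Finset.sum_nonneg fun l _ => ?_
  by_cases hl : l = i
  · subst hl; rw [hD.hμd]; simp
  · exact mul_nonneg (mul_nonneg (hD.hQoff i l (Ne.symm hl)) (hD.hμ0 i l x hx))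
      (Ef_nonneg hτ0 (show (0:ℝ) < x from hx) hW.1 l i)

end Dspec


/-! ### Algebraic structure of `B0`, `Bt1`, `Btm1` -/

section Alg

variable {D : Dat n}

lemma Qii_nonpos (hD : D.Good) (i : Fin n) : D.Q i i ≤ 0 := by
  have h := hD.hQrow i
  have h2 : 0 ≤ ∑ j ∈ Finset.univ.erase i, D.Q i j :=
    Finset.sum_nonneg fun j hj => hD.hQoff i j (Ne.symm (Finset.ne_of_mem_erase hj))
  have h3 : D.Q i i + ∑ j ∈ Finset.univ.erase i, D.Q i j = ∑ j, D.Q i j :=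
    Finset.add_sum_erase _ _ (Finset.mem_univ i)
  linarith [h3.trans h]

lemma rho_nonneg (hD : D.Good) (i : Fin n) : 0 ≤ ∫ x in Set.Ioi (0:ℝ), D.ν i x :=
  setIntegral_nonneg measurableSet_Ioi (hD.hν0 i)

lemma gpos (hD : D.Good) {troot : Fin n → ℝ} (hτok : D.TauOK troot τ) (i : Fin n) :
    0 < (D.s i)^2 - 2*τ*D.a i + 2*τ^2*(D.Q i i - ∫ x in Set.Ioi (0:ℝ), D.ν i x) := by
  obtain ⟨hr, hτ0', hτa, hτT⟩ := hτok
  obtain ⟨hT0, hgT, -⟩ := hr i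
  have hc : D.Q i i - (∫ x in Set.Ioi (0:ℝ), D.ν i x) ≤ 0 := by
    linarith [Qii_nonpos hD i, rho_nonneg hD i]
  have hσ : 0 < (D.s i)^2 := pow_pos (hD.hs i) 2
  have hτT' := hτT i
  nlinarith [mul_pos hσ (sub_pos.mpr hτT'),
    mul_nonneg (mul_nonneg (mul_nonneg (neg_nonneg.mpr hc) hτ0'.le) hT0.le)
      (sub_pos.mpr hτT').le, hT0, hτ0']

/-- diagonal scaling coefficients of `−B₀(τ)⁻¹`. -/
def dd (D : Dat n) (τ : ℝ) : Fin n → ℝ := fun i => (2*(D.s i)^2 - 2*τ*D.a i)⁻¹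

lemma hk_of (hD : D.Good) {troot : Fin n → ℝ} (hτok : D.TauOK troot τ) (i : Fin n) :
    τ * D.a i < (D.s i)^2 := by
  obtain ⟨hr, hτ0', hτa, hτT⟩ := hτok
  by_cases ha : 0 < D.a i
  · have := hτa i ha
    calc τ * D.a i < ((D.s i)^2 / D.a i) * D.a i := mul_lt_mul_of_pos_right this ha
      _ = (D.s i)^2 := by field_simp
  · have h1 : τ * D.a i ≤ 0 := mul_nonpos_of_nonneg_of_nonpos hτ0'.le (not_lt.mp ha)
    exact lt_of_le_of_lt h1 (pow_pos (hD.hs i) 2)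

lemma dd_pos (hk : ∀ i, τ * D.a i < (D.s i)^2) (i : Fin n) : 0 < dd D τ i := by
  rw [dd]
  have := hk i
  exact inv_pos.mpr (by nlinarith)

lemma B0_eq : D.B0 τ = Matrix.diagonal (fun i => 2*τ*D.a i - 2*(D.s i)^2) := by
  ext i j
  by_cases h : i = j <;>
    simp [Dat.B0, Dat.Da, Dat.Ds, Matrix.diagonal_apply, h, Matrix.sub_apply,
      Matrix.smul_apply, smul_eq_mul]

lemma B0_entries_ne (hk : ∀ i, τ * D.a i < (D.s i)^2) (i : Fin n) :
    2*τ*D.a i - 2*(D.s i)^2 ≠ 0 := by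
  have := hk i; nlinarith

lemma B0_det_isUnit (hk : ∀ i, τ * D.a i < (D.s i)^2) : IsUnit (D.B0 τ).det := by
  rw [B0_eq, Matrix.det_diagonal]
  exact isUnit_iff_ne_zero.mpr (Finset.prod_ne_zero_iff.mpr fun i _ => B0_entries_ne hk i)

lemma negB0inv (hk : ∀ i, τ * D.a i < (D.s i)^2) :
    -(D.B0 τ)⁻¹ = Matrix.diagonal (dd D τ) := by
  have hinv : (D.B0 τ)⁻¹ = Matrix.diagonal (fun i => (2*τ*D.a i - 2*(D.s i)^2)⁻¹) := by
    rw [B0_eq]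
    apply Matrix.inv_eq_right_inv
    rw [Matrix.diagonal_mul_diagonal]
    have : (fun i => (2*τ*D.a i - 2*(D.s i)^2) * (2*τ*D.a i - 2*(D.s i)^2)⁻¹)
        = fun _ => 1 := funext fun i => mul_inv_cancel₀ (B0_entries_ne hk i)
    rw [this, Matrix.diagonal_one]
  rw [hinv]
  ext i j
  by_cases h : i = j <;> simp [Matrix.diagonal_apply, h, dd]
  rw [neg_inv]
  congr 1
  ring

lemma Btm1_apply (hk : ∀ i, τ * D.a i < (D.s i)^2) (W : Mnn n) (i j : Fin n) :
    D.Btm1 τ W i j = dd D τ i * D.Bm1 τ W i j := by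
  rw [Dat.Btm1, negB0inv hk, Matrix.diagonal_mul]

lemma Bt1_eq (hk : ∀ i, τ * D.a i < (D.s i)^2) :
    D.Bt1 τ = Matrix.diagonal (fun i => dd D τ i * (D.s i)^2) := by
  rw [Dat.Bt1, negB0inv hk, Dat.B1, Dat.Ds, Matrix.diagonal_mul_diagonal]

lemma Bt1_nonneg (hk : ∀ i, τ * D.a i < (D.s i)^2) (i j : Fin n) : 0 ≤ D.Bt1 τ i j := by
  rw [Bt1_eq hk]
  by_cases h : i = j
  · subst h
    rw [Matrix.diagonal_apply_eq]
    exact mul_nonneg (dd_pos hk i).le (sq_nonneg _)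
  · rw [Matrix.diagonal_apply_ne _ h]

lemma Bm1_apply (W : Mnn n) (i j : Fin n) :
    D.Bm1 τ W i j = D.Ds i j - (2*τ) * D.Da i j
      + (2*τ^2) * (D.H τ W i j + D.K τ W i j) := by
  simp [Dat.Bm1, Matrix.sub_apply, Matrix.add_apply, Matrix.smul_apply, smul_eq_mul]
  ring

end Alg


/-! ### Positivity, monotonicity and continuity of `Btm1` -/

section Btm1Facts

variable {D : Dat n} (hD : D.Good)

include hτ0 hD

lemma Bm1_nonneg {troot : Fin n → ℝ} (hτok : D.TauOK troot τ) {W : Mnn n}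
    (hW : Substoch W) (i j : Fin n) : 0 ≤ D.Bm1 τ W i j := by
  rw [Bm1_apply]
  by_cases h : i = j
  · subst h
    have h1 : D.Q i i - (∫ x in Set.Ioi (0:ℝ), D.ν i x) ≤ D.H τ W i i + D.K τ W i i := by
      linarith [H_diag_ge hτ0 hD hW i, K_diag_ge hτ0 hD hW i]
    have h2 := gpos hD hτok i
    have h3 : (2*τ^2) * (D.Q i i - ∫ x in Set.Ioi (0:ℝ), D.ν i x)
        ≤ (2*τ^2) * (D.H τ W i i + D.K τ W i i) :=
      mul_le_mul_of_nonneg_left h1 (by positivity)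
    have hDs : D.Ds i i = (D.s i)^2 := Matrix.diagonal_apply_eq _ i
    have hDa : D.Da i i = D.a i := Matrix.diagonal_apply_eq _ i
    rw [hDs, hDa]
    nlinarith [h3, h2]
  · have hDs : D.Ds i j = 0 := Matrix.diagonal_apply_ne _ h
    have hDa : D.Da i j = 0 := Matrix.diagonal_apply_ne _ h
    rw [hDs, hDa]
    have h4 : 0 ≤ D.H τ W i j + D.K τ W i j :=
      add_nonneg (H_offdiag_nonneg hτ0 hD hW h) (K_offdiag_nonneg hτ0 hD hW h)
    nlinarith [h4]

lemma Bm1_mono {W W' : Mnn n} (hW : Substoch W) (hW' : Substoch W')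
    (hle : ∀ i j, W i j ≤ W' i j) (i j : Fin n) : D.Bm1 τ W i j ≤ D.Bm1 τ W' i j := by
  rw [Bm1_apply, Bm1_apply]
  have h1 : D.H τ W i j + D.K τ W i j ≤ D.H τ W' i j + D.K τ W' i j :=
    add_le_add (H_mono hτ0 hD hW hW' hle i j) (K_mono hτ0 hD hW hW' hle i j)
  have h2 : (2*τ^2) * (D.H τ W i j + D.K τ W i j)
      ≤ (2*τ^2) * (D.H τ W' i j + D.K τ W' i j) :=
    mul_le_mul_of_nonneg_left h1 (by positivity)
  linarith

lemma Btm1_nonneg (hk : ∀ i, τ * D.a i < (D.s i)^2) {troot : Fin n → ℝ}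
    (hτok : D.TauOK troot τ) {W : Mnn n} (hW : Substoch W) (i j : Fin n) :
    0 ≤ D.Btm1 τ W i j := by
  rw [Btm1_apply hk]
  exact mul_nonneg (dd_pos hk i).le (Bm1_nonneg hτ0 hD hτok hW i j)

lemma Btm1_mono (hk : ∀ i, τ * D.a i < (D.s i)^2) {W W' : Mnn n} (hW : Substoch W)
    (hW' : Substoch W') (hle : ∀ i j, W i j ≤ W' i j) (i j : Fin n) :
    D.Btm1 τ W i j ≤ D.Btm1 τ W' i j := by
  rw [Btm1_apply hk, Btm1_apply hk]
  exact mul_le_mul_of_nonneg_left (Bm1_mono hτ0 hD hW hW' hle i j) (dd_pos hk i).le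

lemma H_tendsto {g : ℕ → Mnn n} {L : Mnn n} (hsub : ∀ k, Substoch (g k))
    (hg : Tendsto g atTop (nhds L)) (i j : Fin n) :
    Tendsto (fun k => D.H τ (g k) i j) atTop (nhds (D.H τ L i j)) := by
  simp_rw [H_apply]
  refine tendsto_integral_of_dominated_convergence (D.ν i)
    (fun k => nu_integrand_aesm hD (g k) i j) (hD.hνi i)
    (fun k => (ae_restrict_iff' measurableSet_Ioi).mpr
      (Filter.Eventually.of_forall fun x hx => nu_bound hτ0 hD (hsub k) i j hx)) ?_
  refine Filter.Eventually.of_forall fun x => ?_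
  simp_rw [Matrix.sub_apply]
  exact Tendsto.const_mul _ ((Ef_tendsto hg x i j).sub tendsto_const_nhds)

lemma K_tendsto {g : ℕ → Mnn n} {L : Mnn n} (hsub : ∀ k, Substoch (g k))
    (hg : Tendsto g atTop (nhds L)) (i j : Fin n) :
    Tendsto (fun k => D.K τ (g k) i j) atTop (nhds (D.K τ L i j)) := by
  simp_rw [K_apply]
  refine Tendsto.const_add _ ?_
  refine tendsto_integral_of_dominated_convergence (fun x => ∑ l, |D.Q i l| * D.μ i l x)
    (fun k => mu_integrand_aesm hD (g k) i j) (mu_abs_integrable hD i)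
    (fun k => (ae_restrict_iff' measurableSet_Ioi).mpr
      (Filter.Eventually.of_forall fun x hx => mu_bound hτ0 hD (hsub k) i j hx)) ?_
  refine Filter.Eventually.of_forall fun x => ?_
  refine tendsto_finset_sum _ fun l _ => ?_
  exact Tendsto.const_mul _ (Ef_tendsto hg x l j)

lemma Btm1_tendsto (hk : ∀ i, τ * D.a i < (D.s i)^2) {g : ℕ → Mnn n} {L : Mnn n}
    (hsub : ∀ k, Substoch (g k)) (hg : Tendsto g atTop (nhds L)) :
    Tendsto (fun k => D.Btm1 τ (g k)) atTop (nhds (D.Btm1 τ L)) := by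
  apply tendsto_pi_nhds.mpr
  intro i
  rw [tendsto_pi_nhds]
  intro j
  simp_rw [Btm1_apply hk, Bm1_apply]
  refine Tendsto.const_mul _ ?_
  refine Tendsto.add tendsto_const_nhds ?_
  refine Tendsto.const_mul _ ?_
  exact (H_tendsto hτ0 hD hsub hg i j).add (K_tendsto hτ0 hD hsub hg i j)

end Btm1Facts

/-! ### Equivalence of (QW) with the fixed-point form -/

section FixEq

variable {D : Dat n}

lemma QW_fixed_iff (hk : ∀ i, τ * D.a i < (D.s i)^2) (X V : Mnn n) :
    D.B1 * (X * X) + D.B0 τ * X + D.Bm1 τ V = 0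
      ↔ X = D.Btm1 τ V + D.Bt1 τ * (X * X) := by
  have hdet := B0_det_isUnit (D := D) hk
  have hBinv : (D.B0 τ)⁻¹ * D.B0 τ = 1 := Matrix.nonsing_inv_mul _ hdet
  have hBinv' : D.B0 τ * (D.B0 τ)⁻¹ = 1 := Matrix.mul_nonsing_inv _ hdet
  constructor
  · intro h
    have h2 : D.B1 * (X * X) + D.B0 τ * X = -(D.Bm1 τ V) := by
      rw [← add_eq_zero_iff_eq_neg]
      exact h
    have h3 : D.B0 τ * X = -(D.Bm1 τ V) - D.B1 * (X * X) := by
      rw [← h2]; noncomm_ring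
    have h4 : X = (D.B0 τ)⁻¹ * (D.B0 τ * X) := by
      rw [← Matrix.mul_assoc, hBinv, Matrix.one_mul]
    have e1 : (D.B0 τ)⁻¹ * (-(D.Bm1 τ V) - D.B1 * (X * X))
        = D.Btm1 τ V + D.Bt1 τ * (X * X) := by
      rw [Dat.Btm1, Dat.Bt1]
      noncomm_ring
    calc X = (D.B0 τ)⁻¹ * (D.B0 τ * X) := h4
      _ = (D.B0 τ)⁻¹ * (-(D.Bm1 τ V) - D.B1 * (X * X)) := by rw [h3]
      _ = D.Btm1 τ V + D.Bt1 τ * (X * X) := e1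
  · intro h
    have h5 : D.B0 τ * X = D.B0 τ * (D.Btm1 τ V + D.Bt1 τ * (X * X)) := by rw [← h]
    have h6 : D.B0 τ * (D.Btm1 τ V + D.Bt1 τ * (X * X))
        = -(D.B0 τ * (D.B0 τ)⁻¹) * D.Bm1 τ V
          + (-(D.B0 τ * (D.B0 τ)⁻¹) * D.B1) * (X * X) := by
      rw [Dat.Btm1, Dat.Bt1]
      noncomm_ring
    rw [h6, hBinv'] at h5
    have h7 : D.B0 τ * X = -(D.Bm1 τ V) - D.B1 * (X * X) := by
      rw [h5]; noncomm_ring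
    rw [h7]
    noncomm_ring

end FixEq


end StmtAux

open StmtAux in

/-- the QME-based iteration (each step solving a quadratic matrix
equation minimally) is well defined and converges monotonically to the minimal
substochastic solution of (QW). -/
theorem stmt8 {n : ℕ} (D : Dat n) (hD : D.Good) (troot : Fin n → ℝ) (τ : ℝ)
    (hτ : D.TauOK troot τ) (Wmin : Matrix (Fin n) (Fin n) ℝ)
    (hmin : Substoch Wmin ∧ D.QW τ Wmin ∧
      ∀ W', Substoch W' → D.QW τ W' → ∀ i j, Wmin i j ≤ W' i j) :
    ∃ W : ℕ → Matrix (Fin n) (Fin n) ℝ, W 0 = 0 ∧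
      (∀ k, (∀ i j, 0 ≤ W (k+1) i j) ∧
        W (k+1) = D.Btm1 τ (W k) + D.Bt1 τ * (W (k+1) * W (k+1)) ∧
        (∀ V, (∀ i j, 0 ≤ V i j) → V = D.Btm1 τ (W k) + D.Bt1 τ * (V * V) →
          ∀ i j, W (k+1) i j ≤ V i j)) ∧
      (∀ k, (∀ i j, 0 ≤ W k i j) ∧ (∀ i j, W k i j ≤ W (k+1) i j) ∧ Substoch (W k)) ∧
      Filter.Tendsto W Filter.atTop (nhds Wmin) := by
  obtain ⟨hsubmin, hQWmin, hminle⟩ := hmin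
  have hτ0 : 0 < τ := hτ.2.1
  have hk : ∀ i, τ * D.a i < (D.s i)^2 := hk_of hD hτ
  have hT1 : ∀ i j, 0 ≤ D.Bt1 τ i j := Bt1_nonneg hk
  have hWm0 : ∀ i j, 0 ≤ Wmin i j := hsubmin.1
  have hQW' : D.B1 * (Wmin * Wmin) + D.B0 τ * Wmin + D.Bm1 τ Wmin = 0 := hQWmin
  have hfixmin : Wmin = D.Btm1 τ Wmin + D.Bt1 τ * (Wmin * Wmin) :=
    (QW_fixed_iff hk Wmin Wmin).mp hQW'
  -- the outer iteration
  set W : ℕ → Matrix (Fin n) (Fin n) ℝ :=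
    fun k => Nat.rec 0 (fun _ Wk => iterLim (D.Bt1 τ) (D.Btm1 τ Wk)) k with hWdef
  have hW0 : W 0 = 0 := rfl
  have hWsucc : ∀ k, W (k+1) = iterLim (D.Bt1 τ) (D.Btm1 τ (W k)) := fun k => rfl
  -- basic bounds, by induction
  have main : ∀ k, (∀ i j, 0 ≤ W k i j) ∧ (∀ i j, W k i j ≤ Wmin i j) := by
    intro k
    induction k with
    | zero => exact ⟨fun i j => le_rfl, fun i j => hWm0 i j⟩
    | succ k ih =>
      obtain ⟨h0, h1⟩ := ih
      have hsubk : Substoch (W k) :=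
        ⟨h0, fun i => le_trans (Finset.sum_le_sum fun j _ => h1 i j) (hsubmin.2 i)⟩
      have hC0 : ∀ i j, 0 ≤ D.Btm1 τ (W k) i j := Btm1_nonneg hτ0 hD hk hτ hsubk
      have hCle : ∀ i j, D.Btm1 τ (W k) i j ≤ D.Btm1 τ Wmin i j :=
        Btm1_mono hτ0 hD hk hsubk hsubmin h1
      have hsup : ∀ i j, (D.Btm1 τ (W k) + D.Bt1 τ * (Wmin * Wmin)) i j ≤ Wmin i j := by
        intro i j
        rw [Matrix.add_apply]
        have : D.Btm1 τ Wmin i j + (D.Bt1 τ * (Wmin * Wmin)) i j = Wmin i j := by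
          conv_rhs => rw [hfixmin]
          rw [Matrix.add_apply]
        linarith [hCle i j]
      rw [hWsucc k]
      exact ⟨iterLim_nonneg hT1 hC0 hWm0 hsup, iterLim_le hT1 hC0 hWm0 hsup⟩
  have hsubW : ∀ k, Substoch (W k) := fun k =>
    ⟨(main k).1, fun i => le_trans (Finset.sum_le_sum fun j _ => (main k).2 i j)
      (hsubmin.2 i)⟩
  -- auxiliary data for step k
  have hC0 : ∀ k, ∀ i j, 0 ≤ D.Btm1 τ (W k) i j := fun k =>
    Btm1_nonneg hτ0 hD hk hτ (hsubW k)
  have hsup : ∀ k, ∀ i j, (D.Btm1 τ (W k) + D.Bt1 τ * (Wmin * Wmin)) i j ≤ Wmin i j := by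
    intro k i j
    rw [Matrix.add_apply]
    have h2 : D.Btm1 τ Wmin i j + (D.Bt1 τ * (Wmin * Wmin)) i j = Wmin i j := by
      conv_rhs => rw [hfixmin]
      rw [Matrix.add_apply]
    linarith [Btm1_mono hτ0 hD hk (hsubW k) hsubmin (main k).2 i j]
  -- the three properties of each step
  have step : ∀ k, (∀ i j, 0 ≤ W (k+1) i j) ∧
      W (k+1) = D.Btm1 τ (W k) + D.Bt1 τ * (W (k+1) * W (k+1)) ∧
      (∀ V, (∀ i j, 0 ≤ V i j) → V = D.Btm1 τ (W k) + D.Bt1 τ * (V * V) →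
        ∀ i j, W (k+1) i j ≤ V i j) := by
    intro k
    refine ⟨(main (k+1)).1, ?_, ?_⟩
    · rw [hWsucc k]
      exact iterLim_fix hT1 (hC0 k) hWm0 (hsup k)
    · intro V hV hfix
      rw [hWsucc k]
      exact fun i j => iterLim_min hT1 (hC0 k) hV hfix i j
  -- monotonicity
  have mono : ∀ k, ∀ i j, W k i j ≤ W (k+1) i j := by
    intro k
    induction k with
    | zero => exact fun i j => (main 1).1 i j
    | succ k ih =>
      intro i j
      rw [hWsucc k, hWsucc (k+1)]
      exact iterLim_mono_C hT1 (hC0 k) (hC0 (k+1))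
        (Btm1_mono hτ0 hD hk (hsubW k) (hsubW (k+1)) ih) hWm0 (hsup (k+1)) i j
  -- the limit
  set Wsup : Matrix (Fin n) (Fin n) ℝ := Matrix.of fun i j => ⨆ k, W k i j with hWsupdef
  have hbdd : ∀ i j, BddAbove (Set.range fun k => W k i j) := by
    intro i j
    refine ⟨Wmin i j, ?_⟩
    rintro y ⟨k, rfl⟩
    exact (main k).2 i j
  have htend : Tendsto W atTop (nhds Wsup) := by
    apply tendsto_pi_nhds.mpr
    intro i
    rw [tendsto_pi_nhds]
    intro j
    exact tendsto_atTop_ciSup (monotone_nat_of_le_succ fun k => mono k i j) (hbdd i j)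
  have hsupnn : ∀ i j, 0 ≤ Wsup i j := fun i j =>
    le_trans ((main 0).1 i j) (le_ciSup (hbdd i j) 0)
  have hsuple : ∀ i j, Wsup i j ≤ Wmin i j := fun i j =>
    ciSup_le fun k => (main k).2 i j
  have hsubsup : Substoch Wsup :=
    ⟨hsupnn, fun i => le_trans (Finset.sum_le_sum fun j _ => hsuple i j) (hsubmin.2 i)⟩
  -- the limit satisfies the fixed-point equation
  have h1 : Tendsto (fun k => W (k+1)) atTop (nhds Wsup) :=
    htend.comp (tendsto_add_atTop_nat 1)
  have hfun : (fun k => W (k+1))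
      = fun k => D.Btm1 τ (W k) + D.Bt1 τ * (W (k+1) * W (k+1)) :=
    funext fun k => (step k).2.1
  have hcont : Continuous fun p : Matrix (Fin n) (Fin n) ℝ => D.Bt1 τ * (p * p) :=
    Continuous.matrix_mul continuous_const (Continuous.matrix_mul continuous_id continuous_id)
  have h2 : Tendsto (fun k => D.Btm1 τ (W k) + D.Bt1 τ * (W (k+1) * W (k+1))) atTop
      (nhds (D.Btm1 τ Wsup + D.Bt1 τ * (Wsup * Wsup))) := by
    refine Tendsto.add ?_ ?_
    · exact Btm1_tendsto hτ0 hD hk hsubW htend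
    · exact (hcont.tendsto Wsup).comp h1
  have heq : Wsup = D.Btm1 τ Wsup + D.Bt1 τ * (Wsup * Wsup) := by
    refine tendsto_nhds_unique ?_ h2
    rw [← hfun]
    exact h1
  have hQWsup : D.QW τ Wsup :=
    show D.B1 * (Wsup * Wsup) + D.B0 τ * Wsup + D.Bm1 τ Wsup = 0 from
      (QW_fixed_iff hk Wsup Wsup).mpr heq
  have hWsupWmin : Wsup = Wmin := by
    ext i j
    exact le_antisymm (hsuple i j) (hminle Wsup hsubsup hQWsup i j)
  refine ⟨W, hW0, step, fun k => ⟨(main k).1, mono k, hsubW k⟩, ?_⟩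
  rw [← hWsupWmin]
  exact htend
end
end

section
/- Assume 0 < τ < τ* and that Q is irreducible. Then the matrix W_min is irreducible, and the matrix G = τ^{-1}(W_min − I) has strictly positive off-diagonal entries. -/
open MeasureTheory Matrix Filter

noncomputable section

namespace Aux
variable {n : ℕ}

lemma substoch_pow {W : Matrix (Fin n) (Fin n) ℝ} (hW : Substoch W) (m : ℕ) :
    Substoch (W ^ m) := by
  induction m with
  | zero =>
    refine ⟨fun i j => ?_, fun i => ?_⟩
    · rw [pow_zero]; by_cases h : i = j <;> simp [Matrix.one_apply, h]
    · rw [pow_zero]; simp [Matrix.one_apply]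
  | succ m ih =>
    obtain ⟨h1, h2⟩ := ih; obtain ⟨g1, g2⟩ := hW
    refine ⟨fun i j => ?_, fun i => ?_⟩
    · rw [pow_succ, Matrix.mul_apply]
      exact Finset.sum_nonneg fun k _ => mul_nonneg (h1 i k) (g1 k j)
    · rw [pow_succ]
      calc ∑ j, (W ^ m * W) i j = ∑ k, (W ^ m) i k * ∑ j, W k j := by
            simp_rw [Matrix.mul_apply, Finset.mul_sum]; rw [Finset.sum_comm]
        _ ≤ ∑ k, (W ^ m) i k * 1 :=
            Finset.sum_le_sum fun k _ => mul_le_mul_of_nonneg_left (g2 k) (h1 i k)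
        _ ≤ 1 := by simpa using h2 i

lemma substoch_entry_le_one {W : Matrix (Fin n) (Fin n) ℝ} (hW : Substoch W) (i j) :
    W i j ≤ 1 := by
  calc W i j ≤ ∑ k, W i k :=
        Finset.single_le_sum (fun k _ => hW.1 i k) (Finset.mem_univ j)
    _ ≤ 1 := hW.2 i

lemma summable_entry {W : Matrix (Fin n) (Fin n) ℝ} (hW : Substoch W) {c : ℝ} (hc : 0 ≤ c)
    (i j : Fin n) :
    Summable fun m : ℕ => ((m.factorial : ℝ)⁻¹ • (c • W) ^ m) i j := by
  refine Summable.of_nonneg_of_le (fun m => ?_) (fun m => ?_)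
    (Real.summable_pow_div_factorial c)
  · rw [smul_pow, Matrix.smul_apply, Matrix.smul_apply, smul_eq_mul, smul_eq_mul]
    exact mul_nonneg (by positivity) (mul_nonneg (pow_nonneg hc m) ((substoch_pow hW m).1 i j))
  · rw [smul_pow, Matrix.smul_apply, Matrix.smul_apply, smul_eq_mul, smul_eq_mul]
    rw [div_eq_inv_mul]
    refine mul_le_mul_of_nonneg_left ?_ (by positivity)
    calc c ^ m * (W ^ m) i j ≤ c ^ m * 1 :=
          mul_le_mul_of_nonneg_left (substoch_entry_le_one (substoch_pow hW m) i j)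
            (pow_nonneg hc m)
      _ = c ^ m := mul_one _

lemma summable_matrix {W : Matrix (Fin n) (Fin n) ℝ} (hW : Substoch W) {c : ℝ} (hc : 0 ≤ c) :
    Summable fun m : ℕ => (m.factorial : ℝ)⁻¹ • (c • W) ^ m := by
  refine Pi.summable.mpr fun i => ?_
  refine Pi.summable.mpr fun j => ?_
  exact summable_entry hW hc i j

lemma mexp_entry {W : Matrix (Fin n) (Fin n) ℝ} (hW : Substoch W) {c : ℝ} (hc : 0 ≤ c)
    (i j : Fin n) :
    mexp (c • W) i j = ∑' m : ℕ, (m.factorial : ℝ)⁻¹ * (c ^ m * (W ^ m) i j) := by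
  rw [mexp, NormedSpace.exp_eq_tsum ℝ]
  show (∑' m : ℕ, (m.factorial : ℝ)⁻¹ • (c • W) ^ m) i j = _
  have hs : HasSum (fun m : ℕ => ((m.factorial : ℝ)⁻¹ • (c • W) ^ m) i j)
      ((∑' m : ℕ, (m.factorial : ℝ)⁻¹ • (c • W) ^ m) i j) :=
    Pi.hasSum.mp (Pi.hasSum.mp (summable_matrix hW hc).hasSum i) j
  rw [← hs.tsum_eq]
  refine tsum_congr fun m => ?_
  rw [smul_pow, Matrix.smul_apply, Matrix.smul_apply, smul_eq_mul, smul_eq_mul]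

end Aux

namespace Aux
variable {n : ℕ}

lemma summable_entry' {W : Matrix (Fin n) (Fin n) ℝ} (hW : Substoch W) {c : ℝ} (hc : 0 ≤ c)
    (i j : Fin n) :
    Summable fun m : ℕ => (m.factorial : ℝ)⁻¹ * (c ^ m * (W ^ m) i j) := by
  have := summable_entry hW hc i j
  simpa [smul_pow, Matrix.smul_apply, smul_eq_mul] using this

lemma mexp_entry_nonneg {W : Matrix (Fin n) (Fin n) ℝ} (hW : Substoch W) {c : ℝ} (hc : 0 ≤ c)
    (i j : Fin n) : 0 ≤ mexp (c • W) i j := by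
  rw [mexp_entry hW hc]
  refine tsum_nonneg fun m => ?_
  exact mul_nonneg (by positivity) (mul_nonneg (pow_nonneg hc m) ((substoch_pow hW m).1 i j))

lemma mexp_diag_ge_one {W : Matrix (Fin n) (Fin n) ℝ} (hW : Substoch W) {c : ℝ} (hc : 0 ≤ c)
    (i : Fin n) : 1 ≤ mexp (c • W) i i := by
  rw [mexp_entry hW hc]
  have h0 : ((0:ℕ).factorial : ℝ)⁻¹ * (c ^ 0 * (W ^ 0) i i) = 1 := by
    simp [Matrix.one_apply]
  calc (1:ℝ) = ((0:ℕ).factorial : ℝ)⁻¹ * (c ^ 0 * (W ^ 0) i i) := h0.symm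
    _ ≤ ∑' m : ℕ, (m.factorial : ℝ)⁻¹ * (c ^ m * (W ^ m) i i) :=
      Summable.le_tsum (summable_entry' hW hc i i) 0 (fun m _ =>
        mul_nonneg (by positivity) (mul_nonneg (pow_nonneg hc m) ((substoch_pow hW m).1 i i)))

lemma mexp_rowsum_le {W : Matrix (Fin n) (Fin n) ℝ} (hW : Substoch W) {c : ℝ} (hc : 0 ≤ c)
    (i : Fin n) : ∑ j, mexp (c • W) i j ≤ Real.exp c := by
  have h1 : ∑ j, mexp (c • W) i j
      = ∑' m : ℕ, ∑ j, (m.factorial : ℝ)⁻¹ * (c ^ m * (W ^ m) i j) := by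
    simp_rw [mexp_entry hW hc]
    exact (Summable.tsum_finsetSum (fun j _ => summable_entry' hW hc i j)).symm
  rw [h1]
  have h2 : Real.exp c = ∑' m : ℕ, c ^ m / (m.factorial : ℝ) := by
    rw [Real.exp_eq_exp_ℝ, NormedSpace.exp_eq_tsum ℝ]
    simp [div_eq_inv_mul, smul_eq_mul]
  rw [h2]
  refine Summable.tsum_le_tsum (fun m => ?_) ?_ (Real.summable_pow_div_factorial c)
  · rw [← Finset.mul_sum, ← Finset.mul_sum, div_eq_inv_mul]
    refine mul_le_mul_of_nonneg_left ?_ (by positivity)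
    calc c ^ m * ∑ j, (W ^ m) i j ≤ c ^ m * 1 :=
        mul_le_mul_of_nonneg_left ((substoch_pow hW m).2 i) (pow_nonneg hc m)
      _ = c ^ m := mul_one _
  · exact summable_sum fun j _ => summable_entry' hW hc i j

lemma mexp_entry_le {W : Matrix (Fin n) (Fin n) ℝ} (hW : Substoch W) {c : ℝ} (hc : 0 ≤ c)
    (i j : Fin n) : mexp (c • W) i j ≤ Real.exp c :=
  le_trans (Finset.single_le_sum (fun k _ => mexp_entry_nonneg hW hc i k) (Finset.mem_univ j))
    (mexp_rowsum_le hW hc i)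

lemma mexp_smul_sub_one (W : Matrix (Fin n) (Fin n) ℝ) (c : ℝ) :
    mexp (c • (W - 1)) = Real.exp (-c) • mexp (c • W) := by
  have h : c • (W - 1) = c • W + (-c) • (1 : Matrix (Fin n) (Fin n) ℝ) := by
    rw [smul_sub, neg_smul, sub_eq_add_neg]
  have hcom : Commute (c • W) ((-c) • (1 : Matrix (Fin n) (Fin n) ℝ)) :=
    (Commute.one_right (c • W)).smul_right (-c)
  rw [h, mexp, Matrix.exp_add_of_commute _ _ hcom]
  have h1 : (-c) • (1 : Matrix (Fin n) (Fin n) ℝ) = diagonal (fun _ : Fin n => -c) := by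
    ext i j
    rw [Matrix.smul_apply, Matrix.diagonal_apply, Matrix.one_apply]
    split_ifs <;> simp
  rw [h1, Matrix.exp_diagonal]
  have h2 : NormedSpace.exp (fun _ : Fin n => -c) = fun _ : Fin n => Real.exp (-c) := by
    rw [Pi.exp_def]
    funext i
    rw [← Real.exp_eq_exp_ℝ]
  rw [h2]
  have h3 : diagonal (fun _ : Fin n => Real.exp (-c)) = Real.exp (-c) • (1 : Matrix (Fin n) (Fin n) ℝ) := by
    ext i j
    rw [Matrix.smul_apply, Matrix.diagonal_apply, Matrix.one_apply]
    split_ifs <;> simp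
  rw [h3, mul_smul_comm, mul_one, mexp]
end Aux

namespace Aux
variable {n : ℕ}

lemma mexp_continuous : Continuous (fun M : Matrix (Fin n) (Fin n) ℝ => mexp M) := by
  letI : SeminormedRing (Matrix (Fin n) (Fin n) ℝ) := Matrix.linftyOpSemiNormedRing
  letI : NormedRing (Matrix (Fin n) (Fin n) ℝ) := Matrix.linftyOpNormedRing
  letI : NormedAlgebra ℝ (Matrix (Fin n) (Fin n) ℝ) := Matrix.linftyOpNormedAlgebra
  letI : NormedAlgebra ℚ (Matrix (Fin n) (Fin n) ℝ) := Matrix.linftyOpNormedAlgebra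
  exact (NormedSpace.exp_continuous : Continuous (NormedSpace.exp : Matrix (Fin n) (Fin n) ℝ → _))

variable {τ : ℝ}

/-- `E W x = e^{τ⁻¹ x (W − I)}`. -/
def E (τ : ℝ) (W : Matrix (Fin n) (Fin n) ℝ) (x : ℝ) : Matrix (Fin n) (Fin n) ℝ :=
  mexp ((τ⁻¹ * x) • (W - 1))

lemma E_eq (W : Matrix (Fin n) (Fin n) ℝ) (x : ℝ) :
    E τ W x = Real.exp (-(τ⁻¹ * x)) • mexp ((τ⁻¹ * x) • W) :=
  mexp_smul_sub_one W _

lemma c_nonneg (hτ : 0 < τ) {x : ℝ} (hx : 0 ≤ x) : 0 ≤ τ⁻¹ * x :=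
  mul_nonneg (inv_nonneg.mpr hτ.le) hx

lemma E_nonneg (hτ : 0 < τ) {W : Matrix (Fin n) (Fin n) ℝ} (hW : Substoch W) {x : ℝ}
    (hx : 0 ≤ x) (i j : Fin n) : 0 ≤ E τ W x i j := by
  rw [E_eq, Matrix.smul_apply, smul_eq_mul]
  exact mul_nonneg (Real.exp_nonneg _) (mexp_entry_nonneg hW (c_nonneg hτ hx) i j)

lemma E_le_one (hτ : 0 < τ) {W : Matrix (Fin n) (Fin n) ℝ} (hW : Substoch W) {x : ℝ}
    (hx : 0 ≤ x) (i j : Fin n) : E τ W x i j ≤ 1 := by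
  rw [E_eq, Matrix.smul_apply, smul_eq_mul]
  calc Real.exp (-(τ⁻¹ * x)) * mexp ((τ⁻¹ * x) • W) i j
      ≤ Real.exp (-(τ⁻¹ * x)) * Real.exp (τ⁻¹ * x) :=
        mul_le_mul_of_nonneg_left (mexp_entry_le hW (c_nonneg hτ hx) i j) (Real.exp_nonneg _)
    _ = 1 := by rw [← Real.exp_add]; simp

lemma E_diag_ge (hτ : 0 < τ) {W : Matrix (Fin n) (Fin n) ℝ} (hW : Substoch W) {x : ℝ}
    (hx : 0 ≤ x) (j : Fin n) : Real.exp (-(τ⁻¹ * x)) ≤ E τ W x j j := by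
  rw [E_eq, Matrix.smul_apply, smul_eq_mul]
  calc Real.exp (-(τ⁻¹ * x)) = Real.exp (-(τ⁻¹ * x)) * 1 := (mul_one _).symm
    _ ≤ _ := mul_le_mul_of_nonneg_left (mexp_diag_ge_one hW (c_nonneg hτ hx) j)
        (Real.exp_nonneg _)

lemma E_rowsum_le_one (hτ : 0 < τ) {W : Matrix (Fin n) (Fin n) ℝ} (hW : Substoch W) {x : ℝ}
    (hx : 0 ≤ x) (i : Fin n) : ∑ j, E τ W x i j ≤ 1 := by
  simp_rw [E_eq, Matrix.smul_apply, smul_eq_mul]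
  rw [← Finset.mul_sum]
  calc Real.exp (-(τ⁻¹ * x)) * ∑ j, mexp ((τ⁻¹ * x) • W) i j
      ≤ Real.exp (-(τ⁻¹ * x)) * Real.exp (τ⁻¹ * x) :=
        mul_le_mul_of_nonneg_left (mexp_rowsum_le hW (c_nonneg hτ hx) i) (Real.exp_nonneg _)
    _ = 1 := by rw [← Real.exp_add]; simp

lemma E_continuous (W : Matrix (Fin n) (Fin n) ℝ) (i j : Fin n) :
    Continuous (fun x : ℝ => E τ W x i j) := by
  have h1 : Continuous (fun x : ℝ => (τ⁻¹ * x) • (W - 1)) :=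
    (continuous_const.mul continuous_id).smul continuous_const
  exact ((mexp_continuous.comp h1).matrix_elem i j)

end Aux


namespace Aux

variable {n : ℕ} (D : Dat n)

lemma one_apply_nonneg (i j : Fin n) : 0 ≤ (1 : Matrix (Fin n) (Fin n) ℝ) i j := by
  rw [Matrix.one_apply]; split_ifs <;> norm_num

lemma one_apply_le_one (i j : Fin n) : (1 : Matrix (Fin n) (Fin n) ℝ) i j ≤ 1 := by
  rw [Matrix.one_apply]; split_ifs <;> norm_num

/-- the positive diagonal `d_i = 2σ_i² − 2τ a_i`. -/
def dd (τ : ℝ) (i : Fin n) : ℝ := 2 * (D.s i) ^ 2 - 2 * τ * D.a i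

lemma dd_pos {troot : Fin n → ℝ} {τ : ℝ} (hD : D.Good) (hτ : D.TauOK troot τ) (i : Fin n) :
    0 < dd D τ i := by
  obtain ⟨-, hτ0, hτa, -⟩ := hτ
  rcases le_or_gt (D.a i) 0 with ha | ha
  · have h1 : 0 ≤ -(2 * τ * D.a i) := by nlinarith
    have h2 : 0 < (D.s i) ^ 2 := pow_pos (hD.hs i) 2
    simp only [dd]; nlinarith
  · have := hτa i ha
    rw [lt_div_iff₀ ha] at this
    simp only [dd]; nlinarith

lemma B0_eq (τ : ℝ) : D.B0 τ = Matrix.diagonal fun i => -(dd D τ i) := by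
  ext i j
  simp only [Dat.B0, Dat.Da, Dat.Ds, dd, Matrix.sub_apply, Matrix.smul_apply,
    Matrix.diagonal_apply, smul_eq_mul]
  split_ifs <;> ring

lemma negB0inv_eq {troot : Fin n → ℝ} {τ : ℝ} (hD : D.Good) (hτ : D.TauOK troot τ) :
    -(D.B0 τ)⁻¹ = Matrix.diagonal fun i => (dd D τ i)⁻¹ := by
  have hinv : (D.B0 τ)⁻¹ = Matrix.diagonal fun i => -(dd D τ i)⁻¹ := by
    apply Matrix.inv_eq_right_inv
    rw [B0_eq, Matrix.diagonal_mul_diagonal]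
    have : (fun i => -(dd D τ i) * -(dd D τ i)⁻¹) = fun _ => (1:ℝ) := by
      funext i
      rw [neg_mul_neg, mul_inv_cancel₀ (dd_pos D hD hτ i).ne']
    rw [this, Matrix.diagonal_one]
  rw [hinv]
  ext i j
  simp [Matrix.diagonal_apply]
  split_ifs <;> simp

/-- entry formula for one step of the iteration -/
lemma iter_apply {troot : Fin n → ℝ} {τ : ℝ} (hD : D.Good) (hτ : D.TauOK troot τ)
    (V : Matrix (Fin n) (Fin n) ℝ) (i j : Fin n) :
    (D.Btm1 τ V + D.Bt1 τ * (V * V)) i j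
      = (dd D τ i)⁻¹ * (D.Bm1 τ V i j + (D.s i) ^ 2 * (V * V) i j) := by
  have h1 : D.Btm1 τ V = Matrix.diagonal (fun i => (dd D τ i)⁻¹) * D.Bm1 τ V := by
    rw [Dat.Btm1, ← negB0inv_eq D hD hτ, neg_mul]
  have h2 : D.Bt1 τ * (V * V)
      = Matrix.diagonal (fun i => (dd D τ i)⁻¹) * (D.Ds * (V * V)) := by
    rw [Dat.Bt1, Dat.B1, Matrix.mul_assoc, negB0inv_eq D hD hτ]
  rw [h1, h2, Matrix.add_apply, Matrix.diagonal_mul, Matrix.diagonal_mul]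
  have h3 : (D.Ds * (V * V)) i j = (D.s i) ^ 2 * (V * V) i j := by
    rw [Dat.Ds, Matrix.diagonal_mul]
  rw [h3, mul_add]

lemma Bm1_apply (τ : ℝ) (V : Matrix (Fin n) (Fin n) ℝ) (i j : Fin n) :
    D.Bm1 τ V i j = (if i = j then (D.s i) ^ 2 - 2 * τ * D.a i else 0)
      + 2 * τ ^ 2 * (D.H τ V i j + D.K τ V i j) := by
  simp only [Dat.Bm1, Dat.Ds, Dat.Da, Matrix.add_apply, Matrix.sub_apply, Matrix.smul_apply,
    Matrix.diagonal_apply, smul_eq_mul]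
  split_ifs <;> ring

lemma H_apply (τ : ℝ) (V : Matrix (Fin n) (Fin n) ℝ) (i j : Fin n) :
    D.H τ V i j = ∫ x in Set.Ioi (0:ℝ),
      D.ν i x * (E τ V x i j - (1 : Matrix (Fin n) (Fin n) ℝ) i j) := by
  have : ∀ x : ℝ, ((D.Dν x * (mexp ((τ⁻¹ * x) • (V - 1)) - 1) : Matrix (Fin n) (Fin n) ℝ)) i j
      = D.ν i x * (E τ V x i j - (1 : Matrix (Fin n) (Fin n) ℝ) i j) := by
    intro x
    simp only [Dat.Dν]
    rw [Matrix.diagonal_mul, Matrix.sub_apply, E]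
  simp only [Dat.H, intP, Matrix.of_apply, this]

lemma K_apply (τ : ℝ) (V : Matrix (Fin n) (Fin n) ℝ) (i j : Fin n) :
    D.K τ V i j = D.Q i j * D.U0 i j + ∫ x in Set.Ioi (0:ℝ),
      ∑ k, D.Q i k * D.μ i k x * E τ V x k j := by
  have : ∀ x : ℝ, ((D.Qμ x * mexp ((τ⁻¹ * x) • (V - 1)) : Matrix (Fin n) (Fin n) ℝ)) i j
      = ∑ k, D.Q i k * D.μ i k x * E τ V x k j := by
    intro x
    simp only [Dat.Qμ]
    rw [Matrix.mul_apply]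
    simp [E]
  simp only [Dat.K, intP, Matrix.add_apply, Matrix.hadamard_apply, Matrix.of_apply, this]

end Aux


namespace Aux

variable {n : ℕ} (D : Dat n)

section Integrab

variable {τ : ℝ} {V : Matrix (Fin n) (Fin n) ℝ}

lemma norm_helper {a b c : ℝ} (ha : 0 ≤ a) (hb0 : 0 ≤ b) (hb1 : b ≤ 1) (hc0 : 0 ≤ c)
    (hc1 : c ≤ 1) : ‖a * (b - c)‖ ≤ a := by
  rw [Real.norm_eq_abs, abs_mul, abs_of_nonneg ha]
  calc a * |b - c| ≤ a * 1 := by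
        refine mul_le_mul_of_nonneg_left ?_ ha
        rw [abs_le]; constructor <;> nlinarith
    _ = a := mul_one a

lemma intg1 (hD : D.Good) (hτ : 0 < τ) (hV : Substoch V) (i j : Fin n) :
    IntegrableOn (fun x => D.ν i x * (E τ V x i j - (1 : Matrix (Fin n) (Fin n) ℝ) i j))
      (Set.Ioi (0:ℝ)) := by
  refine Integrable.mono' (hD.hνi i) ?_ ?_
  · refine ContinuousOn.aestronglyMeasurable ?_ measurableSet_Ioi
    exact (hD.hνc i).mul (((E_continuous V i j).continuousOn).sub continuousOn_const)
  · filter_upwards [ae_restrict_mem measurableSet_Ioi] with x hx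
    exact norm_helper (hD.hν0 i x hx) (E_nonneg hτ hV (le_of_lt hx) i j)
      (E_le_one hτ hV (le_of_lt hx) i j) (one_apply_nonneg i j) (one_apply_le_one i j)

lemma intg2 (hD : D.Good) (hτ : 0 < τ) (hV : Substoch V) (i k j : Fin n) :
    IntegrableOn (fun x => D.Q i k * D.μ i k x * E τ V x k j) (Set.Ioi (0:ℝ)) := by
  rcases eq_or_ne k i with rfl | hk
  · have : (fun x => D.Q k k * D.μ k k x * E τ V x k j) = fun _ => (0:ℝ) := by
      funext x; rw [hD.hμd k x]; ring
    rw [this]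
    exact integrableOn_zero
  · have hμint : IntegrableOn (fun x => D.Q i k * D.μ i k x) (Set.Ioi (0:ℝ)) :=
      (hD.hμi i k (Ne.symm hk)).const_mul _
    refine Integrable.mono' hμint ?_ ?_
    · refine ContinuousOn.aestronglyMeasurable ?_ measurableSet_Ioi
      exact (continuousOn_const.mul (hD.hμc i k (Ne.symm hk))).mul
        ((E_continuous V k j).continuousOn)
    · filter_upwards [ae_restrict_mem measurableSet_Ioi] with x hx
      have hq : 0 ≤ D.Q i k := hD.hQoff i k (Ne.symm hk)
      have hμ : 0 ≤ D.μ i k x := hD.hμ0 i k x hx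
      have h0 := E_nonneg hτ hV (le_of_lt hx) k j
      have h1 := E_le_one hτ hV (le_of_lt hx) k j
      rw [Real.norm_eq_abs, abs_of_nonneg (by positivity)]
      calc D.Q i k * D.μ i k x * E τ V x k j ≤ D.Q i k * D.μ i k x * 1 := by
            refine mul_le_mul_of_nonneg_left h1 (by positivity)
        _ = D.Q i k * D.μ i k x := mul_one _

lemma intg2sum (hD : D.Good) (hτ : 0 < τ) (hV : Substoch V) (i j : Fin n) :
    IntegrableOn (fun x => ∑ k, D.Q i k * D.μ i k x * E τ V x k j) (Set.Ioi (0:ℝ)) :=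
  MeasureTheory.integrable_finset_sum _ fun k _ => intg2 D hD hτ hV i k j

lemma intg3 (hD : D.Good) (hτ : 0 < τ) {i j : Fin n} (hij : i ≠ j) :
    IntegrableOn (fun x => D.μ i j x * Real.exp (-(τ⁻¹ * x))) (Set.Ioi (0:ℝ)) := by
  refine Integrable.mono' (hD.hμi i j hij) ?_ ?_
  · refine ContinuousOn.aestronglyMeasurable ?_ measurableSet_Ioi
    exact (hD.hμc i j hij).mul (Real.continuous_exp.comp (by continuity)).continuousOn
  · filter_upwards [ae_restrict_mem measurableSet_Ioi] with x hx
    have hμ : 0 ≤ D.μ i j x := hD.hμ0 i j x hx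
    have he0 : 0 < Real.exp (-(τ⁻¹ * x)) := Real.exp_pos _
    have he1 : Real.exp (-(τ⁻¹ * x)) ≤ 1 := by
      rw [Real.exp_le_one_iff]
      have : (0:ℝ) < x := hx
      have : 0 ≤ τ⁻¹ * x := by positivity
      linarith
    rw [Real.norm_eq_abs, abs_of_nonneg (by positivity)]
    nlinarith

end Integrab

end Aux


namespace Aux

variable {n : ℕ} (D : Dat n)

section HKBounds

variable {τ : ℝ} {V : Matrix (Fin n) (Fin n) ℝ}

lemma H_offdiag_nonneg (hD : D.Good) (hτ : 0 < τ) (hV : Substoch V) {i j : Fin n}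
    (hij : i ≠ j) : 0 ≤ D.H τ V i j := by
  rw [H_apply]
  refine MeasureTheory.setIntegral_nonneg measurableSet_Ioi fun x hx => ?_
  rw [Matrix.one_apply_ne hij, sub_zero]
  exact mul_nonneg (hD.hν0 i x hx) (E_nonneg hτ hV (le_of_lt hx) i j)

lemma H_diag_ge (hD : D.Good) (hτ : 0 < τ) (hV : Substoch V) (i : Fin n) :
    -(D.rho i) ≤ D.H τ V i i := by
  rw [H_apply, Dat.rho, ← MeasureTheory.integral_neg]
  refine MeasureTheory.setIntegral_mono_on ((hD.hνi i).neg) (intg1 D hD hτ hV i i)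
    measurableSet_Ioi fun x hx => ?_
  rw [Matrix.one_apply_eq]
  have h1 : 0 ≤ D.ν i x := hD.hν0 i x hx
  have h2 : 0 ≤ E τ V x i i := E_nonneg hτ hV (le_of_lt hx) i i
  nlinarith

lemma H_rowsum_nonpos (hD : D.Good) (hτ : 0 < τ) (hV : Substoch V) (i : Fin n) :
    ∑ j, D.H τ V i j ≤ 0 := by
  simp_rw [H_apply]
  rw [← MeasureTheory.integral_finset_sum _ fun j _ => intg1 D hD hτ hV i j]
  refine MeasureTheory.setIntegral_nonpos measurableSet_Ioi fun x hx => ?_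
  have hsum1 : ∑ j, (1 : Matrix (Fin n) (Fin n) ℝ) i j = 1 := by
    simp [Matrix.one_apply]
  have h1 : ∑ j, D.ν i x * (E τ V x i j - (1 : Matrix (Fin n) (Fin n) ℝ) i j)
      = D.ν i x * ((∑ j, E τ V x i j) - 1) := by
    rw [← Finset.mul_sum, Finset.sum_sub_distrib, hsum1]
  rw [h1]
  have h2 := E_rowsum_le_one hτ hV (le_of_lt hx) i
  have h3 := hD.hν0 i x hx
  nlinarith

lemma Ksummand_nonneg (hD : D.Good) (hτ : 0 < τ) (hV : Substoch V) {x : ℝ}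
    (hx : x ∈ Set.Ioi (0:ℝ)) (i j : Fin n) (k : Fin n) :
    0 ≤ D.Q i k * D.μ i k x * E τ V x k j := by
  rcases eq_or_ne k i with rfl | hk
  · rw [hD.hμd k x]; simp
  · exact mul_nonneg (mul_nonneg (hD.hQoff i k (Ne.symm hk)) (hD.hμ0 i k x hx))
      (E_nonneg hτ hV (le_of_lt hx) k j)

lemma K_offdiag_nonneg (hD : D.Good) (hτ : 0 < τ) (hV : Substoch V) {i j : Fin n}
    (hij : i ≠ j) : 0 ≤ D.K τ V i j := by
  rw [K_apply]
  have h1 : 0 ≤ D.Q i j * D.U0 i j :=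
    mul_nonneg (hD.hQoff i j hij) (hD.hU0o i j hij).1
  have h2 : 0 ≤ ∫ x in Set.Ioi (0:ℝ), ∑ k, D.Q i k * D.μ i k x * E τ V x k j :=
    MeasureTheory.setIntegral_nonneg measurableSet_Ioi fun x hx =>
      Finset.sum_nonneg fun k _ => Ksummand_nonneg D hD hτ hV hx i j k
  linarith

lemma K_offdiag_ge (hD : D.Good) (hτ : 0 < τ) (hV : Substoch V) {i j : Fin n} (hij : i ≠ j) :
    D.Q i j * (D.U0 i j + ∫ x in Set.Ioi (0:ℝ), D.μ i j x * Real.exp (-(τ⁻¹ * x)))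
      ≤ D.K τ V i j := by
  rw [K_apply, mul_add]
  refine add_le_add le_rfl ?_
  rw [← MeasureTheory.integral_const_mul]
  refine MeasureTheory.setIntegral_mono_on ((intg3 D hD hτ hij).const_mul _)
    (intg2sum D hD hτ hV i j) measurableSet_Ioi fun x hx => ?_
  calc D.Q i j * (D.μ i j x * Real.exp (-(τ⁻¹ * x)))
      ≤ D.Q i j * D.μ i j x * E τ V x j j := by
        rw [mul_assoc]
        refine mul_le_mul_of_nonneg_left ?_ (hD.hQoff i j hij)
        exact mul_le_mul_of_nonneg_left (E_diag_ge hτ hV (le_of_lt hx) j) (hD.hμ0 i j x hx)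
    _ ≤ ∑ k, D.Q i k * D.μ i k x * E τ V x k j :=
        Finset.single_le_sum (fun k _ => Ksummand_nonneg D hD hτ hV hx i j k)
          (Finset.mem_univ j)

lemma K_diag_ge (hD : D.Good) (hτ : 0 < τ) (hV : Substoch V) (i : Fin n) :
    D.Q i i ≤ D.K τ V i i := by
  rw [K_apply, hD.hU0d i, mul_one]
  have h2 : 0 ≤ ∫ x in Set.Ioi (0:ℝ), ∑ k, D.Q i k * D.μ i k x * E τ V x k i :=
    MeasureTheory.setIntegral_nonneg measurableSet_Ioi fun x hx =>
      Finset.sum_nonneg fun k _ => Ksummand_nonneg D hD hτ hV hx i i k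
  linarith

lemma K_rowsum_nonpos (hD : D.Good) (hτ : 0 < τ) (hV : Substoch V) (i : Fin n) :
    ∑ j, D.K τ V i j ≤ 0 := by
  simp_rw [K_apply]
  rw [Finset.sum_add_distrib]
  rw [← MeasureTheory.integral_finset_sum _ fun j _ => intg2sum D hD hτ hV i j]
  have key : (∫ x in Set.Ioi (0:ℝ), ∑ j, ∑ k, D.Q i k * D.μ i k x * E τ V x k j)
      ≤ ∑ k, D.Q i k * (1 - D.U0 i k) := by
    have hrw : ∀ x : ℝ, ∑ j, ∑ k, D.Q i k * D.μ i k x * E τ V x k j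
        = ∑ k, ∑ j, D.Q i k * D.μ i k x * E τ V x k j := fun x => Finset.sum_comm
    simp_rw [hrw]
    rw [MeasureTheory.integral_finset_sum _ fun k _ =>
      MeasureTheory.integrable_finset_sum _ fun j _ => intg2 D hD hτ hV i k j]
    refine Finset.sum_le_sum fun k _ => ?_
    rcases eq_or_ne k i with rfl | hk
    · have hz : (fun x => ∑ j, D.Q k k * D.μ k k x * E τ V x k j) = fun _ : ℝ => (0:ℝ) := by
        funext x; rw [hD.hμd k x]; simp
      rw [hz, hD.hU0d k]
      simp
    · have hle : ∀ x ∈ Set.Ioi (0:ℝ), ∑ j, D.Q i k * D.μ i k x * E τ V x k j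
          ≤ D.Q i k * D.μ i k x := by
        intro x hx
        have h1 : ∑ j, D.Q i k * D.μ i k x * E τ V x k j
            = D.Q i k * D.μ i k x * ∑ j, E τ V x k j := by
          rw [Finset.mul_sum]
        rw [h1]
        have h2 := E_rowsum_le_one hτ hV (le_of_lt hx) k
        have h3 : 0 ≤ D.Q i k * D.μ i k x :=
          mul_nonneg (hD.hQoff i k (Ne.symm hk)) (hD.hμ0 i k x hx)
        nlinarith
      calc (∫ x in Set.Ioi (0:ℝ), ∑ j, D.Q i k * D.μ i k x * E τ V x k j)
          ≤ ∫ x in Set.Ioi (0:ℝ), D.Q i k * D.μ i k x :=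
            MeasureTheory.setIntegral_mono_on
              (MeasureTheory.integrable_finset_sum _ fun j _ => intg2 D hD hτ hV i k j)
              ((hD.hμi i k (Ne.symm hk)).const_mul _) measurableSet_Ioi hle
        _ = D.Q i k * ∫ x in Set.Ioi (0:ℝ), D.μ i k x := MeasureTheory.integral_const_mul _ _
        _ = D.Q i k * (1 - D.U0 i k) := by
            have h4 := hD.hμU i k (Ne.symm hk)
            have h5 : (∫ x in Set.Ioi (0:ℝ), D.μ i k x) = 1 - D.U0 i k := by linarith
            rw [h5]
  have hfin : (∑ j, D.Q i j * D.U0 i j) + ∑ k, D.Q i k * (1 - D.U0 i k) = 0 := by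
    rw [← Finset.sum_add_distrib]
    have : ∀ k, D.Q i k * D.U0 i k + D.Q i k * (1 - D.U0 i k) = D.Q i k := fun k => by ring
    simp_rw [this]
    exact hD.hQrow i
  linarith

end HKBounds

end Aux


namespace Aux

variable {n : ℕ} (D : Dat n)

/-- the quadratic `φ_i(τ)`. -/
def phi (τ : ℝ) (i : Fin n) : ℝ :=
  (D.s i) ^ 2 - 2 * τ * D.a i + 2 * τ ^ 2 * (D.Q i i - D.rho i)

lemma phi_pos {troot : Fin n → ℝ} {τ : ℝ} (hD : D.Good) (hτ : D.TauOK troot τ) (i : Fin n) :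
    0 < phi D τ i := by
  obtain ⟨hroot, hτ0, -, hlt⟩ := hτ
  obtain ⟨htr0, htr1, htr2⟩ := hroot i
  set f : ℝ → ℝ := fun t =>
    (D.s i) ^ 2 - 2 * t * D.a i + 2 * t ^ 2 * (D.Q i i - ∫ x in Set.Ioi (0:ℝ), D.ν i x) with hf
  have hcont : ContinuousOn f (Set.Icc 0 τ) := by fun_prop
  have hf0 : 0 < f 0 := by
    simp only [hf]
    have := pow_pos (hD.hs i) 2
    norm_num
    nlinarith
  have hphi : phi D τ i = f τ := rfl
  rw [hphi]
  by_contra h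
  push_neg at h
  have h0 : (0:ℝ) ∈ Set.Icc (f τ) (f 0) := ⟨h, hf0.le⟩
  obtain ⟨t, ht, hft⟩ := intermediate_value_Icc' hτ0.le hcont h0
  have ht0 : 0 < t := by
    rcases ht.1.lt_or_eq with h1 | h1
    · exact h1
    · exfalso; rw [← h1] at hft; rw [hft] at hf0; exact lt_irrefl _ hf0
  have := htr2 t ht0 hft
  have := hlt i
  have := ht.2
  linarith

section Step

variable {τ : ℝ} {troot : Fin n → ℝ} {V : Matrix (Fin n) (Fin n) ℝ}

lemma Bm1_diag_ge (hD : D.Good) (hτ0 : 0 < τ) (hV : Substoch V) (i : Fin n) :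
    phi D τ i ≤ D.Bm1 τ V i i := by
  rw [Bm1_apply, if_pos rfl]
  have h1 := H_diag_ge D hD hτ0 hV i
  have h2 := K_diag_ge D hD hτ0 hV i
  have h3 : (0:ℝ) ≤ 2 * τ ^ 2 := by positivity
  simp only [phi]
  nlinarith

lemma Bm1_offdiag_ge (hD : D.Good) (hτ0 : 0 < τ) (hV : Substoch V) {i j : Fin n} (hij : i ≠ j) :
    2 * τ ^ 2 * (D.Q i j * (D.U0 i j + ∫ x in Set.Ioi (0:ℝ),
      D.μ i j x * Real.exp (-(τ⁻¹ * x)))) ≤ D.Bm1 τ V i j := by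
  rw [Bm1_apply, if_neg hij]
  have h1 := H_offdiag_nonneg D hD hτ0 hV hij
  have h2 := K_offdiag_ge D hD hτ0 hV hij
  have h3 : (0:ℝ) ≤ 2 * τ ^ 2 := by positivity
  nlinarith

lemma Bm1_nonneg (hD : D.Good) {troot : Fin n → ℝ} (hτ : D.TauOK troot τ) (hV : Substoch V)
    (i j : Fin n) : 0 ≤ D.Bm1 τ V i j := by
  have hτ0 : 0 < τ := hτ.2.1
  rcases eq_or_ne i j with rfl | hij
  · exact le_trans (phi_pos D hD hτ i).le (Bm1_diag_ge D hD hτ0 hV i)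
  · refine le_trans ?_ (Bm1_offdiag_ge D hD hτ0 hV hij)
    have h1 : 0 ≤ D.Q i j := hD.hQoff i j hij
    have h2 : 0 ≤ D.U0 i j := (hD.hU0o i j hij).1
    have h3 : 0 ≤ ∫ x in Set.Ioi (0:ℝ), D.μ i j x * Real.exp (-(τ⁻¹ * x)) :=
      MeasureTheory.setIntegral_nonneg measurableSet_Ioi fun x hx =>
        mul_nonneg (hD.hμ0 i j x hx) (Real.exp_nonneg _)
    positivity

lemma Bm1_rowsum_le (hD : D.Good) (hτ0 : 0 < τ) (hV : Substoch V) (i : Fin n) :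
    ∑ j, D.Bm1 τ V i j ≤ (D.s i) ^ 2 - 2 * τ * D.a i := by
  simp_rw [Bm1_apply]
  rw [Finset.sum_add_distrib, Finset.sum_ite_eq Finset.univ i
    (fun _ => (D.s i) ^ 2 - 2 * τ * D.a i), if_pos (Finset.mem_univ i)]
  have h1 := H_rowsum_nonpos D hD hτ0 hV i
  have h2 := K_rowsum_nonpos D hD hτ0 hV i
  have h3 : (0:ℝ) ≤ 2 * τ ^ 2 := by positivity
  have h4 : ∑ j, 2 * τ ^ 2 * (D.H τ V i j + D.K τ V i j)
      = 2 * τ ^ 2 * ((∑ j, D.H τ V i j) + ∑ j, D.K τ V i j) := by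
    rw [← Finset.mul_sum, Finset.sum_add_distrib]
  rw [h4]
  nlinarith

lemma mulVV_nonneg (hV : Substoch V) (i j : Fin n) : 0 ≤ (V * V) i j := by
  rw [Matrix.mul_apply]
  exact Finset.sum_nonneg fun k _ => mul_nonneg (hV.1 i k) (hV.1 k j)

lemma mulVV_rowsum_le (hV : Substoch V) (i : Fin n) : ∑ j, (V * V) i j ≤ 1 := by
  have := (substoch_pow hV 2).2 i
  rwa [pow_two] at this

lemma mulVV_entry_ge (hV : Substoch V) (i l j : Fin n) : V i l * V l j ≤ (V * V) i j := by
  rw [Matrix.mul_apply]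
  exact Finset.single_le_sum (fun k _ => mul_nonneg (hV.1 i k) (hV.1 k j)) (Finset.mem_univ l)

/-- one step of the iteration preserves substochasticity -/
lemma step_substoch (hD : D.Good) (hτ : D.TauOK troot τ) (hV : Substoch V) :
    Substoch (D.Btm1 τ V + D.Bt1 τ * (V * V)) := by
  have hτ0 : 0 < τ := hτ.2.1
  constructor
  · intro i j
    rw [iter_apply D hD hτ]
    have h1 := Bm1_nonneg D hD hτ hV i j
    have h2 := mulVV_nonneg hV i j
    have h3 := (dd_pos D hD hτ i)
    positivity
  · intro i
    have hrw : ∑ j, (D.Btm1 τ V + D.Bt1 τ * (V * V)) i j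
        = (dd D τ i)⁻¹ * ((∑ j, D.Bm1 τ V i j) + (D.s i) ^ 2 * ∑ j, (V * V) i j) := by
      simp_rw [iter_apply D hD hτ]
      rw [← Finset.mul_sum, Finset.sum_add_distrib, ← Finset.mul_sum]
    rw [hrw]
    have h1 := Bm1_rowsum_le D hD hτ0 hV i
    have h2 := mulVV_rowsum_le hV i
    have h3 := dd_pos D hD hτ i
    have h4 : 0 ≤ (D.s i) ^ 2 := sq_nonneg _
    have h5 : (∑ j, D.Bm1 τ V i j) + (D.s i) ^ 2 * ∑ j, (V * V) i j ≤ dd D τ i := by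
      simp only [dd]
      nlinarith
    calc (dd D τ i)⁻¹ * ((∑ j, D.Bm1 τ V i j) + (D.s i) ^ 2 * ∑ j, (V * V) i j)
        ≤ (dd D τ i)⁻¹ * dd D τ i := by
          refine mul_le_mul_of_nonneg_left h5 (by positivity)
      _ = 1 := inv_mul_cancel₀ h3.ne'

lemma step_diag_ge (hD : D.Good) (hτ : D.TauOK troot τ) (hV : Substoch V) (i : Fin n) :
    (dd D τ i)⁻¹ * phi D τ i ≤ (D.Btm1 τ V + D.Bt1 τ * (V * V)) i i := by
  have hτ0 : 0 < τ := hτ.2.1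
  rw [iter_apply D hD hτ]
  have h1 := Bm1_diag_ge D hD hτ0 hV i
  have h2 := mulVV_nonneg hV i i
  have h3 := dd_pos D hD hτ i
  have h4 : 0 ≤ (D.s i) ^ 2 := sq_nonneg _
  refine mul_le_mul_of_nonneg_left ?_ (by positivity)
  nlinarith

lemma step_offdiag_ge (hD : D.Good) (hτ : D.TauOK troot τ) (hV : Substoch V) {i j : Fin n}
    (hij : i ≠ j) :
    (dd D τ i)⁻¹ * (2 * τ ^ 2 * (D.Q i j * (D.U0 i j + ∫ x in Set.Ioi (0:ℝ),
      D.μ i j x * Real.exp (-(τ⁻¹ * x)))))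
      ≤ (D.Btm1 τ V + D.Bt1 τ * (V * V)) i j := by
  have hτ0 : 0 < τ := hτ.2.1
  rw [iter_apply D hD hτ]
  have h1 := Bm1_offdiag_ge D hD hτ0 hV hij
  have h2 := mulVV_nonneg hV i j
  have h3 := dd_pos D hD hτ i
  have h4 : 0 ≤ (D.s i) ^ 2 := sq_nonneg _
  refine mul_le_mul_of_nonneg_left ?_ (by positivity)
  nlinarith

lemma step_prop_ge (hD : D.Good) (hτ : D.TauOK troot τ) (hV : Substoch V) (i l j : Fin n) :
    (dd D τ i)⁻¹ * ((D.s i) ^ 2 * (V i l * V l j))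
      ≤ (D.Btm1 τ V + D.Bt1 τ * (V * V)) i j := by
  rw [iter_apply D hD hτ]
  have h1 := Bm1_nonneg D hD hτ hV i j
  have h2 := mulVV_entry_ge hV i l j
  have h3 := dd_pos D hD hτ i
  have h4 : 0 ≤ (D.s i) ^ 2 := sq_nonneg _
  refine mul_le_mul_of_nonneg_left ?_ (by positivity)
  nlinarith

lemma mconst_pos (hD : D.Good) (hτ0 : 0 < τ) {i j : Fin n} (hij : i ≠ j) :
    0 < D.U0 i j + ∫ x in Set.Ioi (0:ℝ), D.μ i j x * Real.exp (-(τ⁻¹ * x)) := by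
  have hnn : 0 ≤ ∫ x in Set.Ioi (0:ℝ), D.μ i j x * Real.exp (-(τ⁻¹ * x)) :=
    MeasureTheory.setIntegral_nonneg measurableSet_Ioi fun x hx =>
      mul_nonneg (hD.hμ0 i j x hx) (Real.exp_nonneg _)
  rcases ((hD.hU0o i j hij).1).lt_or_eq with hU | hU
  · linarith
  · have hμ1 : (∫ x in Set.Ioi (0:ℝ), D.μ i j x) = 1 := by
      have := hD.hμU i j hij
      rw [← hU] at this
      linarith
    rcases hnn.lt_or_eq with h | h
    · linarith
    · exfalso
      have hae0 : (0:ℝ → ℝ) ≤ᵐ[MeasureTheory.volume.restrict (Set.Ioi (0:ℝ))]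
          fun x => D.μ i j x * Real.exp (-(τ⁻¹ * x)) := by
        filter_upwards [ae_restrict_mem measurableSet_Ioi] with x hx
        exact mul_nonneg (hD.hμ0 i j x hx) (Real.exp_nonneg _)
      have hzero := (MeasureTheory.integral_eq_zero_iff_of_nonneg_ae hae0
        (intg3 D hD hτ0 hij)).mp h.symm
      have hμae : (fun x => D.μ i j x) =ᵐ[MeasureTheory.volume.restrict (Set.Ioi (0:ℝ))] 0 := by
        filter_upwards [hzero] with x hx
        have he : Real.exp (-(τ⁻¹ * x)) ≠ 0 := (Real.exp_pos _).ne'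
        have : D.μ i j x * Real.exp (-(τ⁻¹ * x)) = 0 := hx
        exact (mul_eq_zero.mp this).resolve_right he
      have : (∫ x in Set.Ioi (0:ℝ), D.μ i j x) = 0 := by
        rw [MeasureTheory.integral_congr_ae hμae]
        simp
      rw [this] at hμ1
      norm_num at hμ1

end Step

end Aux


namespace Aux

variable {n : ℕ} (D : Dat n)

section Seq

variable {τ : ℝ} {troot : Fin n → ℝ}
variable (W : ℕ → Matrix (Fin n) (Fin n) ℝ)

/-- eventual uniform positive lower bound for an entry of the sequence. -/
def LB (i j : Fin n) : Prop := ∃ ε : ℝ, 0 < ε ∧ ∃ N : ℕ, ∀ k ≥ N, ε ≤ W k i j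

lemma seq_substoch (hD : D.Good) (hτ : D.TauOK troot τ) (hW0 : W 0 = 0)
    (hWrec : ∀ k, W (k+1) = D.Btm1 τ (W k) + D.Bt1 τ * (W k * W k)) (k : ℕ) :
    Substoch (W k) := by
  induction k with
  | zero =>
    rw [hW0]
    exact ⟨fun i j => le_refl 0, fun i => by simp⟩
  | succ k ih =>
    rw [hWrec k]
    exact step_substoch D hD hτ ih

lemma LB_diag (hD : D.Good) (hτ : D.TauOK troot τ) (hW0 : W 0 = 0)
    (hWrec : ∀ k, W (k+1) = D.Btm1 τ (W k) + D.Bt1 τ * (W k * W k)) (i : Fin n) :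
    LB W i i := by
  refine ⟨(dd D τ i)⁻¹ * phi D τ i, ?_, 1, fun k hk => ?_⟩
  · have h1 := dd_pos D hD hτ i
    have h2 := phi_pos D hD hτ i
    positivity
  · obtain ⟨m, rfl⟩ := Nat.exists_eq_add_of_le hk
    rw [Nat.add_comm 1 m, hWrec]
    exact step_diag_ge D hD hτ (seq_substoch D W hD hτ hW0 hWrec _) i

lemma LB_edge (hD : D.Good) (hτ : D.TauOK troot τ) (hW0 : W 0 = 0)
    (hWrec : ∀ k, W (k+1) = D.Btm1 τ (W k) + D.Bt1 τ * (W k * W k)) {i j : Fin n}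
    (hij : i ≠ j) (hq : D.Q i j ≠ 0) : LB W i j := by
  have hτ0 : 0 < τ := hτ.2.1
  have hqpos : 0 < D.Q i j := lt_of_le_of_ne (hD.hQoff i j hij) (Ne.symm hq)
  refine ⟨(dd D τ i)⁻¹ * (2 * τ ^ 2 * (D.Q i j * (D.U0 i j + ∫ x in Set.Ioi (0:ℝ),
    D.μ i j x * Real.exp (-(τ⁻¹ * x))))), ?_, 1, fun k hk => ?_⟩
  · have h1 := dd_pos D hD hτ i
    have h2 := mconst_pos D hD hτ0 hij
    positivity
  · obtain ⟨m, rfl⟩ := Nat.exists_eq_add_of_le hk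
    rw [Nat.add_comm 1 m, hWrec]
    exact step_offdiag_ge D hD hτ (seq_substoch D W hD hτ hW0 hWrec _) hij

lemma LB_trans (hD : D.Good) (hτ : D.TauOK troot τ) (hW0 : W 0 = 0)
    (hWrec : ∀ k, W (k+1) = D.Btm1 τ (W k) + D.Bt1 τ * (W k * W k)) {i l j : Fin n}
    (h1 : LB W i l) (h2 : LB W l j) : LB W i j := by
  obtain ⟨ε1, hε1, N1, hN1⟩ := h1
  obtain ⟨ε2, hε2, N2, hN2⟩ := h2
  have hs := hD.hs i
  have hdd := dd_pos D hD hτ i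
  refine ⟨(dd D τ i)⁻¹ * ((D.s i) ^ 2 * (ε1 * ε2)), by positivity, max N1 N2 + 1,
    fun k hk => ?_⟩
  obtain ⟨m, rfl⟩ := Nat.exists_eq_add_of_le hk
  have hge : max N1 N2 + m ≥ max N1 N2 := Nat.le_add_right _ _
  have e1 : ε1 ≤ W (max N1 N2 + m) i l := hN1 _ (le_trans (le_max_left _ _) hge)
  have e2 : ε2 ≤ W (max N1 N2 + m) l j := hN2 _ (le_trans (le_max_right _ _) hge)
  have hV := seq_substoch D W hD hτ hW0 hWrec (max N1 N2 + m)
  have key := step_prop_ge D hD hτ hV i l j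
  have hstep : max N1 N2 + 1 + m = (max N1 N2 + m) + 1 := by ring
  rw [hstep, hWrec]
  refine le_trans ?_ key
  refine mul_le_mul_of_nonneg_left ?_ (by positivity)
  refine mul_le_mul_of_nonneg_left ?_ (by positivity)
  have w1 : 0 ≤ W (max N1 N2 + m) i l := hV.1 i l
  nlinarith

lemma LB_all (hD : D.Good) (hτ : D.TauOK troot τ) (hW0 : W 0 = 0)
    (hWrec : ∀ k, W (k+1) = D.Btm1 τ (W k) + D.Bt1 τ * (W k * W k)) {i j : Fin n}
    (hij : i ≠ j) : LB W i j := by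
  obtain ⟨r, p, hp0, hpr, hpe⟩ := hD.hQirr i j hij
  have claim : ∀ k, k ≤ r → LB W i (p k) := by
    intro k
    induction k with
    | zero =>
      intro _
      rw [hp0]
      exact LB_diag D W hD hτ hW0 hWrec i
    | succ k ih =>
      intro hk
      have h1 : LB W i (p k) := ih (le_of_lt (Nat.lt_of_succ_le hk))
      have h2 : LB W (p k) (p (k+1)) := by
        rcases eq_or_ne (p k) (p (k+1)) with he | he
        · rw [← he]
          exact LB_diag D W hD hτ hW0 hWrec _
        · exact LB_edge D W hD hτ hW0 hWrec he (hpe k (Nat.lt_of_succ_le hk))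
      exact LB_trans D W hD hτ hW0 hWrec h1 h2
  have := claim r (le_refl r)
  rwa [hpr] at this

end Seq

end Aux


/-- Proposition 8 of the paper: `W_min` is irreducible and
`G = τ⁻¹(W_min − I)` has strictly positive off-diagonal entries. -/
theorem stmt9 {n : ℕ} (D : Dat n) (hD : D.Good) (troot : Fin n → ℝ) (τ : ℝ)
    (hτ : D.TauOK troot τ) (W : ℕ → Matrix (Fin n) (Fin n) ℝ) (hW0 : W 0 = 0)
    (hWrec : ∀ k, W (k+1) = D.Btm1 τ (W k) + D.Bt1 τ * (W k * W k))
    (Wmin : Matrix (Fin n) (Fin n) ℝ)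
    (hlim : Filter.Tendsto W Filter.atTop (nhds Wmin)) :
    MatIrr Wmin ∧ ∀ i j, i ≠ j → 0 < (τ⁻¹ • (Wmin - 1)) i j := by
  have hτ0 : 0 < τ := hτ.2.1
  have hpos : ∀ i j : Fin n, i ≠ j → 0 < Wmin i j := by
    intro i j hij
    obtain ⟨ε, hε, N, hN⟩ := Aux.LB_all D W hD hτ hW0 hWrec hij
    have htd : Filter.Tendsto (fun k => W k i j) Filter.atTop (nhds (Wmin i j)) :=
      ((continuous_id.matrix_elem i j).tendsto Wmin).comp hlim
    have hle : ε ≤ Wmin i j :=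
      ge_of_tendsto htd (Filter.eventually_atTop.mpr ⟨N, hN⟩)
    linarith
  constructor
  · intro i j hij
    refine ⟨1, fun k => if k = 0 then i else j, by simp, by simp, fun k hk => ?_⟩
    have hk0 : k = 0 := Nat.lt_one_iff.mp hk
    subst hk0
    simp only [if_pos rfl, if_neg (Nat.one_ne_zero)]
    exact (hpos i j hij).ne'
  · intro i j hij
    have h1 : (τ⁻¹ • (Wmin - 1)) i j = τ⁻¹ * (Wmin i j - 0) := by
      rw [Matrix.smul_apply, Matrix.sub_apply, Matrix.one_apply_ne hij, smul_eq_mul]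
    rw [h1, sub_zero]
    exact mul_pos (inv_pos.mpr hτ0) (hpos i j hij)
end
end

section
/- Let G be an n×n generator with F(G) = 0. Then Θ 1 = −2(Δ_a 1 + Λ 1) and π^T Θ 1 = −2κ, where Θ = −2Δ_a − Δ_{σ²} G − 2Λ. -/
open MeasureTheory Matrix Filter

noncomputable section

/-- stochastic matrix -/
def StochM {n : ℕ} (W : Matrix (Fin n) (Fin n) ℝ) : Prop :=
  (∀ i j, 0 ≤ W i j) ∧ ∀ i, ∑ j, W i j = 1

section Aux
attribute [local instance] Matrix.linftyOpNormedRing Matrix.linftyOpNormedAlgebra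
  Matrix.linftyOpNormedAddCommGroup
open NormedSpace
variable {n : ℕ}

lemma sa_pow_rowsum {A : Matrix (Fin n) (Fin n) ℝ} (hA : ∀ i, ∑ j, A i j = 0) :
    ∀ k : ℕ, 1 ≤ k → ∀ i, ∑ j, (A ^ k) i j = 0 := by
  intro k hk
  induction k with
  | zero => omega
  | succ m ih =>
    intro i
    rw [pow_succ]
    simp only [Matrix.mul_apply]
    rw [Finset.sum_comm]
    simp_rw [← Finset.mul_sum, hA, mul_zero, Finset.sum_const_zero]

lemma sa_exp_rowsum (A : Matrix (Fin n) (Fin n) ℝ) (hA : ∀ i, ∑ j, A i j = 0) (i : Fin n) :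
    ∑ j, mexp A i j = 1 := by
  classical
  let L : Matrix (Fin n) (Fin n) ℝ →L[ℝ] ℝ :=
    LinearMap.toContinuousLinearMap
      { toFun := fun M => ∑ j, M i j
        map_add' := fun M N => by simp [Finset.sum_add_distrib]
        map_smul' := fun c M => by simp [Finset.mul_sum] }
  have hL : ∀ M : Matrix (Fin n) (Fin n) ℝ, L M = ∑ j, M i j := fun _ => rfl
  have hs : Summable (fun k : ℕ => ((k.factorial : ℝ))⁻¹ • A ^ k) := expSeries_summable' A
  have h1 : L (exp A) = ∑' k : ℕ, L (((k.factorial : ℝ))⁻¹ • A ^ k) := by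
    rw [exp_eq_tsum ℝ]; exact L.map_tsum hs
  have h2 : (∑' k : ℕ, L (((k.factorial : ℝ))⁻¹ • A ^ k)) = 1 := by
    rw [tsum_eq_single 0]
    · rw [L.map_smul, hL]
      simp [Matrix.one_apply, Finset.sum_ite_eq]
    · intro k hk
      rw [L.map_smul, hL]
      rw [sa_pow_rowsum hA k (Nat.one_le_iff_ne_zero.2 hk) i]
      simp
  rw [mexp, ← hL, h1, h2]

lemma sa_pow_nonneg {A : Matrix (Fin n) (Fin n) ℝ} (hA : ∀ i j, 0 ≤ A i j) :
    ∀ k : ℕ, ∀ i j, 0 ≤ (A ^ k) i j := by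
  intro k
  induction k with
  | zero => intro i j; simp [Matrix.one_apply]; positivity
  | succ m ih =>
    intro i j
    rw [pow_succ, Matrix.mul_apply]
    exact Finset.sum_nonneg fun k _ => mul_nonneg (ih i k) (hA k j)

lemma sa_exp_nonneg {A : Matrix (Fin n) (Fin n) ℝ} (hA : ∀ i j, 0 ≤ A i j)
    (i j : Fin n) : 0 ≤ mexp A i j := by
  classical
  let L : Matrix (Fin n) (Fin n) ℝ →L[ℝ] ℝ :=
    LinearMap.toContinuousLinearMap
      { toFun := fun M => M i j
        map_add' := fun M N => rfl
        map_smul' := fun c M => rfl }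
  have hL : ∀ M : Matrix (Fin n) (Fin n) ℝ, L M = M i j := fun _ => rfl
  have hs : Summable (fun k : ℕ => ((k.factorial : ℝ))⁻¹ • A ^ k) := expSeries_summable' A
  have h1 : L (exp A) = ∑' k : ℕ, L (((k.factorial : ℝ))⁻¹ • A ^ k) := by
    rw [exp_eq_tsum ℝ]; exact L.map_tsum hs
  rw [mexp, show exp A i j = L (exp A) from rfl, h1]
  refine tsum_nonneg fun k => ?_
  rw [L.map_smul, hL]
  have := sa_pow_nonneg hA k i j
  positivity

lemma sa_exp_gen_nonneg {G : Matrix (Fin n) (Fin n) ℝ} (hG : ∀ i j, i ≠ j → 0 ≤ G i j)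
    {t : ℝ} (ht : 0 ≤ t) (i j : Fin n) : 0 ≤ mexp (t • G) i j := by
  classical
  set c : ℝ := ∑ k, t * |G k k| with hc
  have hB : ∀ i j, 0 ≤ (t • G + c • (1 : Matrix (Fin n) (Fin n) ℝ)) i j := by
    intro i j
    by_cases h : i = j
    · subst h
      simp only [Matrix.add_apply, Matrix.smul_apply, Matrix.one_apply_eq, smul_eq_mul, mul_one]
      have h1 : t * |G i i| ≤ c :=
        Finset.single_le_sum (f := fun k => t * |G k k|) (fun k _ => by positivity)
          (Finset.mem_univ i)
      have h2 : -(t * G i i) ≤ t * |G i i| := by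
        rw [← mul_neg]
        exact mul_le_mul_of_nonneg_left (neg_le_abs _) ht
      linarith
    · simp only [Matrix.add_apply, Matrix.smul_apply, Matrix.one_apply_ne h, smul_eq_mul,
        mul_zero, add_zero]
      exact mul_nonneg ht (hG i j h)
  have hcomm : Commute ((-c) • (1 : Matrix (Fin n) (Fin n) ℝ))
      (t • G + c • (1 : Matrix (Fin n) (Fin n) ℝ)) :=
    (Commute.one_left _).smul_left (-c)
  have hsplit : t • G = (-c) • (1 : Matrix (Fin n) (Fin n) ℝ)
      + (t • G + c • (1 : Matrix (Fin n) (Fin n) ℝ)) := by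
    rw [neg_smul]; abel
  have hexp1 : exp ((-c) • (1 : Matrix (Fin n) (Fin n) ℝ))
      = Real.exp (-c) • (1 : Matrix (Fin n) (Fin n) ℝ) := by
    have h1 : ((-c) • (1 : Matrix (Fin n) (Fin n) ℝ)) = algebraMap ℝ _ (-c) :=
      (Algebra.algebraMap_eq_smul_one (-c)).symm
    rw [h1, Matrix.algebraMap_eq_diagonal, Matrix.exp_diagonal]
    ext a b
    simp [Matrix.diagonal_apply, Pi.algebraMap_apply, Real.exp_eq_exp_ℝ, Matrix.one_apply]
  rw [mexp, hsplit, Matrix.exp_add_of_commute _ _ hcomm, hexp1, smul_mul_assoc, one_mul]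
  simp only [Matrix.smul_apply, smul_eq_mul]
  exact mul_nonneg (Real.exp_nonneg _) (sa_exp_nonneg hB i j)

lemma sa_exp_entry_cont (G : Matrix (Fin n) (Fin n) ℝ) (i j : Fin n) :
    Continuous fun s : ℝ => mexp (s • G) i j := by
  let L : Matrix (Fin n) (Fin n) ℝ →L[ℝ] ℝ :=
    LinearMap.toContinuousLinearMap
      { toFun := fun M => M i j
        map_add' := fun M N => rfl
        map_smul' := fun c M => rfl }
  have h1 : Continuous fun s : ℝ => s • G := continuous_id.smul continuous_const
  exact L.continuous.comp (exp_continuous.comp h1)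

end Aux

section CumExp
variable {n : ℕ} {G : Matrix (Fin n) (Fin n) ℝ} (hG : IsGen G)
include hG

lemma sa_exp_gen_le_one {t : ℝ} (ht : 0 ≤ t) (i j : Fin n) : mexp (t • G) i j ≤ 1 := by
  have hrs : ∑ j', mexp (t • G) i j' = 1 :=
    sa_exp_rowsum _ (fun i => by simp only [Matrix.smul_apply, smul_eq_mul, ← Finset.mul_sum, hG.2 i, mul_zero]) i
  calc mexp (t • G) i j ≤ ∑ j', mexp (t • G) i j' :=
        Finset.single_le_sum (fun k _ => sa_exp_gen_nonneg hG.1 ht i k) (Finset.mem_univ j)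
    _ = 1 := hrs

lemma sa_cumExp_nonneg {x : ℝ} (hx : 0 ≤ x) (i j : Fin n) : 0 ≤ cumExp G x i j := by
  refine intervalIntegral.integral_nonneg hx fun u hu => ?_
  exact sa_exp_gen_nonneg hG.1 hu.1 i j

lemma sa_cumExp_le {x : ℝ} (hx : 0 ≤ x) (i j : Fin n) : cumExp G x i j ≤ x := by
  have h := intervalIntegral.integral_mono_on (a := 0) (b := x) (μ := volume) hx
    ((sa_exp_entry_cont G i j).intervalIntegrable _ _)
    (intervalIntegrable_const (c := (1:ℝ)))
    (fun u hu => sa_exp_gen_le_one hG hu.1 i j)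
  simpa [cumExp] using h

lemma sa_cumExp_rowsum {x : ℝ} (hx : 0 ≤ x) (i : Fin n) : ∑ j, cumExp G x i j = x := by
  have h1 : ∑ j, cumExp G x i j = ∫ s in (0:ℝ)..x, ∑ j, mexp (s • G) i j := by
    rw [intervalIntegral.integral_finset_sum]
    · rfl
    · exact fun j _ => (sa_exp_entry_cont G i j).intervalIntegrable _ _
  rw [h1]
  have h2 : ∀ s ∈ Set.uIcc (0:ℝ) x, ∑ j, mexp (s • G) i j = 1 := by
    intro s hs
    rw [Set.uIcc_of_le hx] at hs
    exact sa_exp_rowsum _ (fun i => by simp only [Matrix.smul_apply, smul_eq_mul, ← Finset.mul_sum, hG.2 i, mul_zero]) i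
  rw [intervalIntegral.integral_congr h2]
  simp

lemma sa_cumExp_cont (i j : Fin n) : Continuous fun x : ℝ => cumExp G x i j :=
  intervalIntegral.continuous_primitive
    (fun a b => (sa_exp_entry_cont G i j).intervalIntegrable a b) 0

end CumExp

section Main
variable {n : ℕ} (D : Dat n)

lemma lam_rowsum (hD : D.Good) (hM : D.Moments) {G : Matrix (Fin n) (Fin n) ℝ}
    (hG : IsGen G) (i : Fin n) :
    ∑ j, D.Lam G i j = (∫ x in Set.Ioi (0:ℝ), x * D.ν i x)
      + ∑ j, D.Q i j * ∫ x in Set.Ioi (0:ℝ), x * D.μ i j x := by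
  classical
  have hCm : ∀ k j : Fin n, AEStronglyMeasurable (fun x => cumExp G x k j)
      (volume.restrict (Set.Ioi (0:ℝ))) :=
    fun k j => (sa_cumExp_cont hG k j).aestronglyMeasurable.restrict
  have hCB : ∀ x ∈ Set.Ioi (0:ℝ), ∀ k j : Fin n, |cumExp G x k j| ≤ x := by
    intro x hx k j
    have hx0 : (0:ℝ) ≤ x := le_of_lt hx
    exact abs_le.2 ⟨by linarith [sa_cumExp_nonneg hG hx0 k j], sa_cumExp_le hG hx0 k j⟩
  -- integrability of ν-part entries
  have int1 : ∀ j : Fin n, Integrable (fun x => D.ν i x * cumExp G x i j)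
      (volume.restrict (Set.Ioi (0:ℝ))) := by
    intro j
    refine MeasureTheory.Integrable.mono (hM.1 i)
      (((hD.hνc i).aestronglyMeasurable measurableSet_Ioi).mul (hCm i j)) ?_
    refine (ae_restrict_iff' measurableSet_Ioi).2 (ae_of_all _ fun x hx => ?_)
    have hx0 : (0:ℝ) < x := hx
    have hν := hD.hν0 i x hx
    rw [Real.norm_eq_abs, Real.norm_eq_abs, abs_mul, abs_mul, abs_of_nonneg hν,
      abs_of_nonneg (le_of_lt hx0)]
    calc D.ν i x * |cumExp G x i j| ≤ D.ν i x * x :=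
          mul_le_mul_of_nonneg_left (hCB x hx i j) hν
      _ = x * D.ν i x := by ring
  -- integrability of μ-part terms
  have int2 : ∀ k j : Fin n,
      Integrable (fun x => D.Q i k * D.μ i k x * cumExp G x k j)
        (volume.restrict (Set.Ioi (0:ℝ))) := by
    intro k j
    by_cases hk : k = i
    · subst hk
      have : (fun x => D.Q k k * D.μ k k x * cumExp G x k j) = fun _ => (0:ℝ) :=
        funext fun x => by rw [hD.hμd k x]; ring
      rw [this]; exact integrable_zero _ _ _
    · have hki : i ≠ k := fun h => hk h.symm
      have him : Integrable (fun x => |D.Q i k| * (x * D.μ i k x))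
          (volume.restrict (Set.Ioi (0:ℝ))) := (hM.2 i k).const_mul _
      refine MeasureTheory.Integrable.mono him
        (((((hD.hμc i k hki).aestronglyMeasurable measurableSet_Ioi).const_mul
          (D.Q i k)).mul (hCm k j))) ?_
      refine (ae_restrict_iff' measurableSet_Ioi).2 (ae_of_all _ fun x hx => ?_)
      have hx0 : (0:ℝ) < x := hx
      have hμ := hD.hμ0 i k x hx
      rw [Real.norm_eq_abs, Real.norm_eq_abs, abs_mul, abs_mul, abs_mul,
        abs_of_nonneg hμ, abs_mul, abs_of_nonneg (le_of_lt hx0), abs_of_nonneg hμ,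
        abs_abs]
      calc |D.Q i k| * D.μ i k x * |cumExp G x k j| ≤ |D.Q i k| * D.μ i k x * x := by
            refine mul_le_mul_of_nonneg_left (hCB x hx k j) (by positivity)
        _ = |D.Q i k| * (x * D.μ i k x) := by ring
  -- entry formulas
  have hf1 : ∀ x, ∀ j, (D.Dν x * cumExp G x) i j = D.ν i x * cumExp G x i j := by
    intro x j
    simp [Dat.Dν, Matrix.mul_apply, Matrix.diagonal_apply, ite_mul, Finset.sum_ite_eq]
  have hf2 : ∀ x, ∀ j, (D.Qμ x * cumExp G x) i j
      = ∑ k, D.Q i k * D.μ i k x * cumExp G x k j := by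
    intro x j
    simp [Dat.Qμ, Matrix.mul_apply]
  -- sum of ν part
  have part1 : ∑ j, intP (fun x => D.Dν x * cumExp G x) i j
      = ∫ x in Set.Ioi (0:ℝ), x * D.ν i x := by
    have : ∀ j, intP (fun x => D.Dν x * cumExp G x) i j
        = ∫ x in Set.Ioi (0:ℝ), D.ν i x * cumExp G x i j := by
      intro j
      refine setIntegral_congr_fun measurableSet_Ioi fun x _ => hf1 x j
    simp_rw [this]
    rw [← integral_finset_sum _ (fun j _ => int1 j)]
    refine setIntegral_congr_fun measurableSet_Ioi fun x hx => ?_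
    rw [← Finset.mul_sum, sa_cumExp_rowsum hG (le_of_lt hx) i, mul_comm]
  -- sum of μ part
  have int3 : ∀ k : Fin n, Integrable (fun x => D.Q i k * D.μ i k x * x)
      (volume.restrict (Set.Ioi (0:ℝ))) := by
    intro k
    have : (fun x => D.Q i k * D.μ i k x * x) = fun x => D.Q i k * (x * D.μ i k x) :=
      funext fun x => by ring
    rw [this]
    exact (hM.2 i k).const_mul _
  have part2 : ∑ j, intP (fun x => D.Qμ x * cumExp G x) i j
      = ∑ j, D.Q i j * ∫ x in Set.Ioi (0:ℝ), x * D.μ i j x := by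
    have h1 : ∀ j, intP (fun x => D.Qμ x * cumExp G x) i j
        = ∫ x in Set.Ioi (0:ℝ), ∑ k, D.Q i k * D.μ i k x * cumExp G x k j := by
      intro j
      refine setIntegral_congr_fun measurableSet_Ioi fun x _ => hf2 x j
    simp_rw [h1]
    have h2 : ∀ j, Integrable (fun x => ∑ k, D.Q i k * D.μ i k x * cumExp G x k j)
        (volume.restrict (Set.Ioi (0:ℝ))) :=
      fun j => integrable_finset_sum _ (fun k _ => int2 k j)
    rw [← integral_finset_sum _ (fun j _ => h2 j)]
    have h3 : ∫ x in Set.Ioi (0:ℝ), ∑ j, ∑ k, D.Q i k * D.μ i k x * cumExp G x k j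
        = ∫ x in Set.Ioi (0:ℝ), ∑ k, D.Q i k * D.μ i k x * x := by
      refine setIntegral_congr_fun measurableSet_Ioi fun x hx => ?_
      rw [Finset.sum_comm]
      refine Finset.sum_congr rfl fun k _ => ?_
      rw [← Finset.mul_sum, sa_cumExp_rowsum hG (le_of_lt hx) k]
    rw [h3, integral_finset_sum _ (fun k _ => int3 k)]
    refine Finset.sum_congr rfl fun k _ => ?_
    have : (fun x => D.Q i k * D.μ i k x * x) = fun x => D.Q i k * (x * D.μ i k x) :=
      funext fun x => by ring
    rw [this, MeasureTheory.integral_const_mul]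
  -- combine
  have : ∀ j, D.Lam G i j = intP (fun x => D.Dν x * cumExp G x) i j
      + intP (fun x => D.Qμ x * cumExp G x) i j := fun j => rfl
  simp_rw [this, Finset.sum_add_distrib, part1, part2]

end Main

/-- `Θ𝟙 = −2(Δ_a𝟙 + Λ𝟙)` and `πᵀΘ𝟙 = −2κ` for a generator solution
`G` of `F(G)=0`. -/
theorem stmt15 {n : ℕ} (D : Dat n) (hD : D.Good) (hM : D.Moments)
    (π : Fin n → ℝ) (hπ : D.IsStat π)
    (G : Matrix (Fin n) (Fin n) ℝ) (hG : IsGen G) (hF : D.F G = 0) :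
    (∀ i, ∑ j, D.Theta G i j = -2 * (D.a i + ∑ j, D.Lam G i j)) ∧
    ∑ i, π i * (∑ j, D.Theta G i j) = -2 * D.kappa π := by
  classical
  have key : ∀ i, ∑ j, D.Theta G i j = -2 * (D.a i + ∑ j, D.Lam G i j) := by
    intro i
    have h1 : ∑ j, ((-2:ℝ) • D.Da) i j = -2 * D.a i := by
      simp [Dat.Da, Matrix.diagonal_apply, Finset.sum_ite_eq, apply_ite]
    have h2 : ∑ j, (D.Ds * G) i j = 0 := by
      have : ∀ j, (D.Ds * G) i j = (D.s i)^2 * G i j := by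
        intro j
        simp [Dat.Ds, Matrix.mul_apply, Matrix.diagonal_apply, ite_mul, Finset.sum_ite_eq]
      simp_rw [this, ← Finset.mul_sum, hG.2 i, mul_zero]
    have h3 : ∀ j, D.Theta G i j = ((-2:ℝ) • D.Da) i j - (D.Ds * G) i j
        - 2 * D.Lam G i j := by
      intro j
      simp [Dat.Theta, Matrix.sub_apply, Matrix.smul_apply, smul_eq_mul]
    simp_rw [h3, Finset.sum_sub_distrib, h1, h2, ← Finset.mul_sum]
    ring
  refine ⟨key, ?_⟩
  rw [Dat.kappa, Finset.mul_sum]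
  refine Finset.sum_congr rfl fun i _ => ?_
  rw [key i, lam_rowsum D hD hM hG i]
  ring
end
end
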